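/- arXiv:1912.03345 — 3 statements merged into one kernel-verified Lean document; each statement's English description precedes it below -/
import Mathlib

section
/- The word 'babab' is an obstruction for the Fibonacci word: it is not a factor of the Fibonacci word, but both 'baba' and 'abab' are factors. -/
/-- The factor of the infinite word `W` of length `n` starting at position `i`. -/
def factorAt {α : Type*} (W : ℕ → α) (i n : ℕ) : List α :=
  (List.range n).map (fun j => W (i + j))

/-- `v` is a (contiguous) factor of the infinite word `W`. -/
def IsFactor {α : Type*} (W : ℕ → α) (v : List α) : Prop :=
  ∃ i, factorAt W i v.length = v

/-- `v` is an obstruction for `W`: not a factor, but all proper factors of `v` are factors. -/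
def IsObstructionW {α : Type*} (W : ℕ → α) (v : List α) : Prop :=
  ¬ IsFactor W v ∧ ∀ u : List α, u <:+: v → u ≠ v → IsFactor W u

/-- Cogrowth: the number of obstructions of length at most `n`. -/
noncomputable def cogrowth {α : Type*} (W : ℕ → α) (n : ℕ) : ℕ :=
  {v : List α | IsObstructionW W v ∧ v.length ≤ n}.ncard

def UniformlyRecurrent {α : Type*} (W : ℕ → α) : Prop :=
  ∀ u : List α, IsFactor W u → ∃ C, ∀ v : List α, IsFactor W v → v.length = C → u <:+: v

def EventuallyPeriodic {α : Type*} (W : ℕ → α) : Prop :=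
  ∃ p, 0 < p ∧ ∃ N, ∀ i, N ≤ i → W (i + p) = W i

/-- Fibonacci finite words: u₀ = b = ff, u₁ = a = tt, u_{k+2} = u_{k+1} ++ u_k. -/
def fibWordAux : ℕ → List Bool
  | 0 => [false]
  | 1 => [true]
  | (k+2) => fibWordAux (k+1) ++ fibWordAux k

/-- The infinite Fibonacci word, limit of the `fibWordAux` (letter `a` = `true`, `b` = `false`). -/
def fibWord (n : ℕ) : Bool := (fibWordAux (n+2)).getD n false

/- ### auxiliary lemmas -/

lemma fibWordAux_pos (k : ℕ) : 0 < (fibWordAux k).length := by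
  match k with
  | 0 => simp [fibWordAux]
  | 1 => simp [fibWordAux]
  | (k+2) =>
    rw [fibWordAux]
    simp only [List.length_append]
    have := fibWordAux_pos (k+1)
    omega

lemma fibWordAux_len (k : ℕ) : k ≤ (fibWordAux (k+1)).length := by
  match k with
  | 0 => simp
  | 1 => simp [fibWordAux]
  | (k+2) =>
    rw [fibWordAux]
    simp only [List.length_append]
    have h1 := fibWordAux_len (k+1)
    have h2 := fibWordAux_pos (k+1)
    omega

lemma fibWordAux_prefix_succ (k : ℕ) : fibWordAux (k+1) <+: fibWordAux (k+2) := by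
  rw [fibWordAux]; exact List.prefix_append _ _

lemma fibWordAux_prefix (k m : ℕ) (h : k ≤ m) :
    fibWordAux (k+1) <+: fibWordAux (m+1) := by
  induction m with
  | zero => interval_cases k; exact List.prefix_rfl
  | succ m ih =>
    rcases Nat.lt_or_ge k (m+1) with h' | h'
    · exact (ih (by omega)).trans (fibWordAux_prefix_succ m)
    · have : k = m + 1 := by omega
      subst this; exact List.prefix_rfl

lemma fibWord_eq_getD (n m : ℕ) (h : n + 2 ≤ m) :
    fibWord n = (fibWordAux m).getD n false := by
  obtain ⟨t, ht⟩ := fibWordAux_prefix (n+1) (m-1) (by omega)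
  have hm : m - 1 + 1 = m := by omega
  rw [hm] at ht
  have hlen : n < (fibWordAux (n+2)).length :=
    lt_of_lt_of_le (Nat.lt_succ_self n) (fibWordAux_len (n+1))
  rw [fibWord, ← ht, List.getD_append _ _ _ _ hlen]

/-- Any short infix of `x ++ y` is an infix of `x ++ y.take 4` or of `y`. -/
lemma infix_split (v x y : List Bool) (h : v <:+: x ++ y) (hv : v.length ≤ 5) :
    v <:+: x ++ y.take 4 ∨ v <:+: y := by
  obtain ⟨s, t, hst⟩ := h
  rcases Nat.lt_or_ge s.length x.length with hs | hs
  · left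
    have h1 : (x ++ y).take (s.length + v.length) = s ++ v := by
      rw [← hst, show s.length + v.length = (s ++ v).length by simp, List.take_left]
    have h2 : (x ++ y).take (s.length + v.length) <+: (x ++ y).take (x.length + 4) := by
      apply List.take_prefix_take_left
      omega
    have h3 : (x ++ y).take (x.length + 4) = x ++ y.take 4 := by rw [List.take_append]; simp
    rw [h3, h1] at h2
    exact ((List.suffix_append s v).isInfix).trans h2.isInfix
  · right
    have hx : x <+: s ++ v ++ t := hst ▸ List.prefix_append x y
    have hxs : x <+: s := by
      apply List.prefix_of_prefix_length_le hx _ hs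
      simp only [List.append_assoc]
      exact List.prefix_append _ _
    obtain ⟨s', rfl⟩ := hxs
    refine ⟨s', t, ?_⟩
    simp only [List.append_assoc] at hst ⊢
    exact (List.append_cancel_left hst)

lemma take_four (k : ℕ) :
    (fibWordAux (k+3) ++ [true, false, true, true]).take 4 = [true, false, true, true] := by
  match k with
  | 0 => decide
  | (k+1) =>
    obtain ⟨t, ht⟩ := fibWordAux_prefix 3 (k+3) (by omega)
    rw [← ht, List.append_assoc, List.take_append_of_le_length (by decide)]
    decide

lemma not_infix_fibWordAux (k : ℕ) :
    ¬ [false, true, false, true, false] <:+: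
      (fibWordAux (k+3) ++ [true, false, true, true]) := by
  match k with
  | 0 => decide
  | 1 => decide
  | (k+2) =>
    intro h
    rw [show k+2+3 = k+3+2 by omega, fibWordAux, List.append_assoc] at h
    rcases infix_split _ _ _ h (by decide) with h1 | h2
    · rw [take_four k] at h1
      exact not_infix_fibWordAux (k+1) h1
    · exact not_infix_fibWordAux k h2

lemma factorAt_eq (i : ℕ) :
    factorAt fibWord i 5 = ((fibWordAux (i+6)).drop i).take 5 := by
  have hlen : i + 5 ≤ (fibWordAux (i+6)).length := fibWordAux_len (i+5)
  apply List.ext_getElem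
  · simp [factorAt]; omega
  · intro j hj hj'
    simp only [factorAt, List.getElem_map, List.getElem_range,
      List.getElem_take, List.getElem_drop]
    rw [fibWord_eq_getD (i+j) (i+6) (by simp [factorAt] at hj; omega)]
    rw [List.getD_eq_getElem _ _ (by simp [factorAt] at hj; omega)]

theorem fibWord_babab_obstruction :
    ¬ IsFactor fibWord [false, true, false, true, false] ∧
      IsFactor fibWord [false, true, false, true] ∧
      IsFactor fibWord [true, false, true, false] := by
  refine ⟨?_, ⟨4, by decide⟩, ⟨3, by decide⟩⟩
  rintro ⟨i, hi⟩
  simp only [List.length_cons, List.length_nil] at hi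
  have hinf : factorAt fibWord i 5 <:+: fibWordAux (i+6) := by
    rw [factorAt_eq]
    exact (List.take_prefix _ _).isInfix.trans (List.drop_suffix _ _).isInfix
  rw [hi] at hinf
  have : [false, true, false, true, false] <:+:
      (fibWordAux (i+3+3) ++ [true, false, true, true]) := by
    rw [show i+3+3 = i+6 by omega]
    exact hinf.trans (List.prefix_append _ _).isInfix
  exact not_infix_fibWordAux (i+3) this
end

section
/- Every obstruction of the Fibonacci word has length equal to a Fibonacci number (where the Fibonacci numbers are 1, 2, 3, 5, 8, ...). -/
local notation "s" => fibWordAux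


/-- The Fibonacci morphism. -/
def fibσ (w : List Bool) : List Bool := w.flatMap (fun c => if c then [true, false] else [true])

lemma fibσ_nil : fibσ [] = [] := rfl
lemma fibσ_append (x y : List Bool) : fibσ (x ++ y) = fibσ x ++ fibσ y := by
  simp [fibσ]
lemma fibσ_cons_true (w : List Bool) : fibσ (true :: w) = true :: false :: fibσ w := by simp [fibσ]
lemma fibσ_cons_false (w : List Bool) : fibσ (false :: w) = true :: fibσ w := by simp [fibσ]

lemma fibσ_s : ∀ k, fibσ (s k) = s (k+1)
  | 0 => rfl
  | 1 => rfl
  | (k+2) => by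
    show fibσ (s (k+1) ++ s k) = _
    rw [fibσ_append, fibσ_s (k+1), fibσ_s k]
    rfl

lemma s_ne_nil : ∀ k, s k ≠ []
  | 0 => by simp [fibWordAux]
  | 1 => by simp [fibWordAux]
  | (k+2) => by
    show s (k+1) ++ s k ≠ []
    simp [s_ne_nil (k+1)]

lemma s_length : ∀ k, (s k).length = Nat.fib (k+1)
  | 0 => rfl
  | 1 => rfl
  | (k+2) => by
    show (s (k+1) ++ s k).length = _
    rw [List.length_append, s_length (k+1), s_length k]
    have h : Nat.fib (k+1+2) = Nat.fib (k+1) + Nat.fib (k+1+1) := Nat.fib_add_two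
    show Nat.fib (k+1+1) + Nat.fib (k+1) = Nat.fib (k+1+2)
    omega

lemma s_head : ∀ k, (s (k+1)).head? = some true
  | 0 => rfl
  | (k+1) => by
    show (s (k+1) ++ s k).head? = some true
    rw [List.head?_append_of_ne_nil _ ]
    · exact s_head k
    · exact s_ne_nil (k+1)

def NoFF (l : List Bool) : Prop := l.IsChain (fun p q => p = true ∨ q = true)

lemma noFF_s : ∀ k, NoFF (s k)
  | 0 => by simp [NoFF, fibWordAux]
  | 1 => by simp [NoFF, fibWordAux]
  | (k+2) => by
    show NoFF (s (k+1) ++ s k)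
    rw [NoFF, List.isChain_append]
    refine ⟨noFF_s (k+1), noFF_s k, ?_⟩
    intro x hx y hy
    match k with
    | 0 =>
      simp [fibWordAux] at hx
      left; simp [hx]
    | (m+1) =>
      rw [s_head m] at hy
      right; simpa using hy.symm

/-- Greedy block decoding (inverse of the Fibonacci morphism on aligned words). -/
def dec : List Bool → List Bool
  | [] => []
  | [true] => [false]
  | true :: false :: r => true :: dec r
  | true :: true :: r => false :: dec (true :: r)
  | false :: r => dec r

lemma dec_append : ∀ (l1 l2 : List Bool), l2.head? = some true →
    dec (l1 ++ l2) = dec l1 ++ dec l2 := by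
  intro l1 l2 h
  induction l1 using dec.induct with
  | case1 => simp [dec]
  | case2 =>
    match l2, h with
    | true :: r, _ => simp [dec]
  | case3 r ih => simpa [dec] using ih
  | case4 r ih => simpa [dec] using ih
  | case5 r ih => simpa [dec] using ih

lemma fibσ_head_ne_false : ∀ w r, fibσ w ≠ false :: r := by
  intro w r hw
  cases w with
  | nil => simp [fibσ] at hw
  | cons d w' => cases d
                 · rw [fibσ_cons_false] at hw; simp at hw
                 · rw [fibσ_cons_true] at hw; simp at hw

lemma dec_sigma : ∀ w, dec (fibσ w) = w := by
  intro w
  induction w with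
  | nil => rfl
  | cons c w ih =>
    cases c
    · rw [fibσ_cons_false]
      match hw : fibσ w, ih with
      | [], ih => simp [dec, ← ih]
      | true :: r, ih => simp [dec, ← ih]
      | false :: r, ih => exact absurd hw (fibσ_head_ne_false w r)
    · rw [fibσ_cons_true]
      simp [dec, ih]

lemma fibσ_inj : Function.Injective fibσ := by
  intro a b h
  rw [← dec_sigma a, h, dec_sigma]

lemma sig_dec : ∀ l : List Bool, l.head? = some true → NoFF l → fibσ (dec l) = l := by
  intro l
  induction l using dec.induct with
  | case1 => simp
  | case2 => intro _ _; rfl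
  | case3 r ih =>
    intro _ hn
    have hr : r.head? = some true ∨ r = [] := by
      rcases r with _ | ⟨c, r'⟩
      · right; rfl
      · left
        have := (List.isChain_cons.1 (List.isChain_cons.1 hn).2).1 c rfl
        simp at this; simp [this]
    have hnr : NoFF r := (List.isChain_cons.1 (List.isChain_cons.1 hn).2).2
    rcases hr with hr | hr
    · rw [dec, fibσ_cons_true, ih hr hnr]
    · subst hr; rfl
  | case4 r ih =>
    intro _ hn
    have hnr : NoFF (true :: r) := (List.isChain_cons.1 hn).2
    rw [dec, fibσ_cons_false, ih rfl hnr]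
  | case5 r ih => intro h; simp at h

lemma fibσ_length_ge (w : List Bool) : w.length ≤ (fibσ w).length := by
  induction w with
  | nil => simp
  | cons c w ih =>
    cases c
    · rw [fibσ_cons_false]; simpa using ih
    · rw [fibσ_cons_true]; simp; omega

lemma fibσ_head (c : Bool) (w : List Bool) : (fibσ (c :: w)).head? = some true := by
  cases c
  · rw [fibσ_cons_false]; rfl
  · rw [fibσ_cons_true]; rfl

lemma sig_last_false {z w : List Bool} (h : fibσ z = w ++ [false]) :
    ∃ u, z = u ++ [true] ∧ w = fibσ u ++ [true] := by
  rcases List.eq_nil_or_concat z with rfl | ⟨L, c, rfl⟩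
  · simp [fibσ] at h
  · rw [List.concat_eq_append, fibσ_append] at h
    cases c
    · exfalso
      have : (fibσ L ++ fibσ [false]).getLast? = some false := by rw [h, List.getLast?_concat]
      rw [show fibσ [false] = [true] from rfl, List.getLast?_concat] at this
      simp at this
    · rw [show fibσ [true] = [true, false] from rfl] at h
      refine ⟨L, by simp, ?_⟩
      have : (fibσ L ++ [true]) ++ [false] = w ++ [false] := by simpa using h
      exact (List.append_cancel_right this).symm

lemma sig_last_true {z w : List Bool} (h : fibσ z = w ++ [true]) :
    ∃ u, z = u ++ [false] ∧ w = fibσ u := by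
  rcases List.eq_nil_or_concat z with rfl | ⟨L, c, rfl⟩
  · simp [fibσ] at h
  · rw [List.concat_eq_append, fibσ_append] at h
    cases c
    · rw [show fibσ [false] = [true] from rfl] at h
      exact ⟨L, by simp, (List.append_cancel_right h).symm⟩
    · exfalso
      rw [show fibσ [true] = [true, false] from rfl] at h
      have : ((fibσ L ++ [true]) ++ [false]).getLast? = some true := by
        rw [show (fibσ L ++ [true]) ++ [false] = fibσ L ++ [true, false] by simp, h,
          List.getLast?_concat]
      rw [List.getLast?_concat] at this
      simp at this

def Pz (k : ℕ) : List Bool := (s k).dropLast.dropLast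

def lt2 (k : ℕ) : List Bool := if k % 2 = 0 then [true, false] else [false, true]

lemma dropLast2 (w : List Bool) (c d : Bool) : ((w ++ [c, d]).dropLast).dropLast = w := by
  rw [show w ++ [c,d] = (w ++ [c]) ++ [d] by simp, List.dropLast_concat, List.dropLast_concat]

lemma s_split : ∀ k, s (k+2) = Pz (k+2) ++ lt2 k
  | 0 => rfl
  | 1 => rfl
  | (k+2) => by
    have ih := s_split k
    have h1 : s (k+4) = (s (k+3) ++ Pz (k+2)) ++ lt2 k := by
      show s (k+3) ++ s (k+2) = _
      rw [ih, List.append_assoc]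
    have h2 : Pz (k+4) = s (k+3) ++ Pz (k+2) := by
      rw [Pz, h1]
      rcases Nat.mod_two_eq_zero_or_one k with hk | hk
      · rw [lt2, if_pos hk]; exact dropLast2 _ _ _
      · rw [lt2, if_neg (by omega)]; exact dropLast2 _ _ _
    have h3 : lt2 (k+2) = lt2 k := by
      unfold lt2
      have h : (k+2) % 2 = k % 2 := by omega
      rw [h]
    show s (k+4) = Pz (k+4) ++ lt2 (k+2)
    rw [h3, h2, List.append_assoc, ← ih]
    rfl

lemma sigma_lt2 (k : ℕ) : fibσ (lt2 k) = [true] ++ lt2 (k+1) := by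
  rcases Nat.mod_two_eq_zero_or_one k with hk | hk
  · rw [lt2, if_pos hk, lt2, if_neg (by omega)]; rfl
  · rw [lt2, if_neg (by omega), lt2, if_pos (by omega)]; rfl

lemma P_succ (k : ℕ) : fibσ (Pz (k+2)) ++ [true] = Pz (k+3) := by
  have h1 : s (k+3) = fibσ (Pz (k+2)) ++ fibσ (lt2 k) := by
    rw [← fibσ_append, ← s_split k, fibσ_s]
  rw [sigma_lt2] at h1
  have h2 : s (k+3) = Pz (k+3) ++ lt2 (k+1) := s_split (k+1)
  have h3 : (fibσ (Pz (k+2)) ++ [true]) ++ lt2 (k+1) = Pz (k+3) ++ lt2 (k+1) := by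
    rw [List.append_assoc]
    rw [← h1, h2]
  exact List.append_cancel_right h3

lemma Pz_length (k : ℕ) : (Pz (k+2)).length + 2 = Nat.fib (k+3) := by
  have h := congrArg List.length (s_split k)
  rw [s_length] at h
  have h2 : (lt2 k).length = 2 := by unfold lt2; split <;> rfl
  simp only [List.length_append, h2] at h
  have h' : Nat.fib (k+2+1) = Nat.fib (k+3) := rfl
  omega

/-- `w` is a factor of the Fibonacci language. -/
def FactorF (w : List Bool) : Prop := ∃ k, w <:+: s (k+2)

lemma s_infix_s2 (m : ℕ) : s m <:+: s (m+2) := ⟨s (m+1), [], by simp [show s (m+2) = s (m+1) ++ s m from rfl]⟩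

lemma factorF_of_infix {w : List Bool} {m : ℕ} (h : w <:+: s m) : FactorF w :=
  ⟨m, h.trans (s_infix_s2 m)⟩

lemma FactorF.infix {w v : List Bool} (h : FactorF w) (hv : v <:+: w) : FactorF v := by
  obtain ⟨k, hk⟩ := h
  exact ⟨k, hv.trans hk⟩

lemma FactorF.noFF {w : List Bool} (h : FactorF w) : NoFF w := by
  obtain ⟨k, hk⟩ := h
  exact (noFF_s (k+2)).infix hk

lemma noFF_helper1 {x y : List Bool} (h : NoFF (x ++ y)) (hx : x.getLast? = some false) :
    y = [] ∨ y.head? = some true := by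
  rcases y with _ | ⟨c, y'⟩
  · exact Or.inl rfl
  · right
    have := (List.isChain_append.1 h).2.2 false hx c rfl
    simp at this
    simp [this]

lemma noFF_helper2 {x y : List Bool} (h : NoFF (x ++ y)) (hy : y.head? = some false) :
    x = [] ∨ x.getLast? = some true := by
  rcases List.eq_nil_or_concat x with rfl | ⟨L, c, rfl⟩
  · exact Or.inl rfl
  · right
    rw [List.concat_eq_append, List.getLast?_concat]
    have := (List.isChain_append.1 h).2.2 c
      (by simp [List.concat_eq_append, List.getLast?_concat]) false hy
    simp at this
    simp [this]

lemma noFF_helper3 {w : List Bool} (h : NoFF (w ++ [false, false])) : False := by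
  have := (List.isChain_append.1 h).2.1
  simp [List.isChain_cons_cons] at this

lemma ne_nil_of_head {w : List Bool} (hw : w.head? = some true) : w ≠ [] := by
  intro h; simp [h] at hw

lemma head_append_of_head {w : List Bool} (x : List Bool) (hw : w.head? = some true) :
    (w ++ x).head? = some true := by
  rw [List.head?_append_of_ne_nil _ (ne_nil_of_head hw)]; exact hw

/-- Core alignment lemma: an occurrence of a word starting with `a` whose following
context starts with `a` (or is empty) decodes under `dec`. -/
lemma core {m : ℕ} {p w q : List Bool} (h : p ++ w ++ q = s (m+2))
    (hw : w.head? = some true) (hq : q = [] ∨ q.head? = some true) :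
    FactorF (dec w) ∧ fibσ (dec w) = w := by
  have hnoff : NoFF w := FactorF.noFF ⟨m, p, q, h⟩
  have hsig : fibσ (dec w) = w := sig_dec w hw hnoff
  have hdec : dec (p ++ (w ++ q)) = dec p ++ (dec w ++ dec q) := by
    rcases hq with rfl | hq
    · simp only [List.append_nil]
      rw [dec_append p w hw, show dec ([] : List Bool) = [] from rfl, List.append_nil]
    · rw [dec_append p (w ++ q) (head_append_of_head q hw), dec_append w q hq]
  have hs : s (m+2) = fibσ (s (m+1)) := (fibσ_s (m+1)).symm
  have hfin : dec (p ++ (w ++ q)) = s (m+1) := by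
    rw [show p ++ (w ++ q) = p ++ w ++ q by simp, h, hs, dec_sigma]
  rw [hdec] at hfin
  exact ⟨factorF_of_infix (m := m+1) ⟨dec p, dec q, by rw [List.append_assoc]; exact hfin⟩, hsig⟩

lemma key1 {w : List Bool} (h : FactorF (w ++ [false])) (hw : w.head? = some true) :
    ∃ u', w = fibσ u' ++ [true] ∧ FactorF (u' ++ [true]) := by
  obtain ⟨m, p, q, hocc⟩ := h
  have hno : NoFF (p ++ (w ++ [false]) ++ q) := by
    have := noFF_s (m+2); rwa [← hocc] at this
  have hq : q = [] ∨ q.head? = some true := by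
    refine noFF_helper1 (x := p ++ (w ++ [false])) (y := q) hno ?_
    rw [List.getLast?_append_of_ne_nil _ (by simp)]
    rw [show w ++ [false] = w ++ [false] from rfl, List.getLast?_concat]
  obtain ⟨hf, hsig⟩ := core hocc (head_append_of_head _ hw) hq
  obtain ⟨u', hu1, hu2⟩ := sig_last_false hsig
  exact ⟨u', hu2, hu1 ▸ hf⟩

lemma key2 {w : List Bool} (h : FactorF (w ++ [true])) (hw : w.head? = some true) :
    ∃ z c, w = fibσ z ∧ FactorF (z ++ [c]) := by
  obtain ⟨m, p, q, hocc⟩ := h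
  have hwq : (w ++ [true]).head? = some true := head_append_of_head _ hw
  rcases hq : q with _ | ⟨c, q'⟩
  · subst hq
    obtain ⟨hf, hsig⟩ := core hocc hwq (Or.inl rfl)
    obtain ⟨z, hz1, hz2⟩ := sig_last_true hsig
    exact ⟨z, false, hz2, hz1 ▸ hf⟩
  · subst hq
    cases c
    · -- following letter is false: regroup
      have hocc2 : p ++ (w ++ [true, false]) ++ q' = s (m+2) := by
        rw [← hocc]; simp
      have hno : NoFF (p ++ (w ++ [true, false]) ++ q') := by
        have := noFF_s (m+2); rwa [← hocc2] at this
      have hq' : q' = [] ∨ q'.head? = some true := by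
        refine noFF_helper1 (x := p ++ (w ++ [true, false])) (y := q') hno ?_
        rw [List.getLast?_append_of_ne_nil _ (by simp)]
        rw [show w ++ [true, false] = (w ++ [true]) ++ [false] by simp, List.getLast?_concat]
      obtain ⟨hf, hsig⟩ := core hocc2 (head_append_of_head _ hw) hq'
      obtain ⟨z1, hz1, hz2⟩ := sig_last_false (z := dec (w ++ [true, false]))
        (w := w ++ [true]) (by rw [hsig]; simp)
      have hw2 : w = fibσ z1 := List.append_cancel_right hz2
      exact ⟨z1, true, hw2, hz1 ▸ hf⟩
    · -- following letter is true
      obtain ⟨hf, hsig⟩ := core hocc hwq (Or.inr rfl)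
      obtain ⟨z, hz1, hz2⟩ := sig_last_true hsig
      exact ⟨z, false, hz2, hz1 ▸ hf⟩

lemma key0 {w : List Bool} (h : FactorF (false :: w)) : FactorF ([true, false] ++ w) := by
  obtain ⟨m, p, q, hocc⟩ := h
  have hno : NoFF (p ++ ((false :: w) ++ q)) := by
    have := noFF_s (m+2); rw [← hocc] at this; rwa [List.append_assoc] at this
  have hp : p = [] ∨ p.getLast? = some true := noFF_helper2 hno rfl
  rcases hp with rfl | hp
  · exfalso
    have hh : (s (m+2)).head? = some true := s_head (m+1)
    rw [← hocc] at hh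
    simp at hh
  · rcases List.eq_nil_or_concat p with rfl | ⟨p0, c, rfl⟩
    · simp at hp
    · rw [List.concat_eq_append, List.getLast?_concat] at hp
      injection hp with hp
      subst hp
      refine factorF_of_infix (m := m+2) ⟨p0, q, ?_⟩
      rw [← hocc]; simp

lemma bispecial_P : ∀ n (u : List Bool), u.length = n →
    FactorF (true :: u) → FactorF (false :: u) →
    FactorF (u ++ [true]) → FactorF (u ++ [false]) →
    ∃ k, u = Pz (k+2) := by
  intro n
  induction n using Nat.strong_induction_on with
  | _ n IH =>
    intro u hlen hL1 hL2 hR1 hR2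
    rcases u with _ | ⟨c, u0⟩
    · exact ⟨0, rfl⟩
    set u : List Bool := c :: u0 with hu_def
    have hune : u ≠ [] := by simp [hu_def]
    -- head of u is true
    have hhead : u.head? = some true := by
      have hno : NoFF (false :: u) := hL2.noFF
      have := (List.isChain_cons.1 hno).1
      have hc := this c rfl
      simp at hc
      simp [hu_def, hc]
    -- Step 1: decompose u from `u ++ [false]` being a factor
    obtain ⟨u', hu'σ, hu'R1⟩ := key1 hR2 hhead
    -- Step 2: `u ++ [true]` factor gives FactorF (u' ++ [false])
    have hu'R2 : FactorF (u' ++ [false]) := by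
      obtain ⟨z, d, hzσ, hzF⟩ := key2 hR1 hhead
      rw [hu'σ] at hzσ
      obtain ⟨z', hz'1, hz'2⟩ := sig_last_true hzσ.symm
      have hzz : z = u' ++ [false] := by rw [hz'1, fibσ_inj hz'2.symm]
      rw [hzz] at hzF
      cases d
      · exfalso
        refine noFF_helper3 (w := u') ?_
        have := hzF.noFF
        rwa [show u' ++ [false] ++ [false] = u' ++ [false, false] by simp] at this
      · exact hzF.infix ⟨[], [true], by simp⟩
    -- Step 3: `true :: u` factor gives FactorF (false :: u')
    have hu'L2 : FactorF (false :: u') := by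
      have hrw : true :: u = fibσ (false :: u') ++ [true] := by
        rw [fibσ_cons_false, hu'σ]; rfl
      rw [hrw] at hL1
      obtain ⟨z, d, hzσ, hzF⟩ := key2 hL1 (fibσ_head _ _)
      rw [fibσ_inj hzσ.symm] at hzF
      exact hzF.infix ⟨[], [d], by simp⟩
    -- Step 4: `false :: u` factor gives FactorF (true :: u')
    have hu'L1 : FactorF (true :: u') := by
      have h2 : FactorF ([true, false] ++ u) := key0 hL2
      have hrw : [true, false] ++ u = fibσ (true :: u') ++ [true] := by
        rw [fibσ_cons_true, hu'σ]; rfl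
      rw [hrw] at h2
      obtain ⟨z, d, hzσ, hzF⟩ := key2 h2 (fibσ_head _ _)
      rw [fibσ_inj hzσ.symm] at hzF
      exact hzF.infix ⟨[], [d], by simp⟩
    -- induction
    have hlt : u'.length < n := by
      have h1 := fibσ_length_ge u'
      have h2 : u.length = (fibσ u').length + 1 := by rw [hu'σ]; simp
      omega
    obtain ⟨k, hk⟩ := IH u'.length hlt u' rfl hu'L1 hu'L2 hu'R1 hu'R2
    refine ⟨k + 1, ?_⟩
    rw [hu'σ, hk, P_succ]

@[simp] lemma factorAt_length {α : Type*} (W : ℕ → α) (i n : ℕ) :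
    (factorAt W i n).length = n := by simp [factorAt]

lemma factorAt_append {α : Type*} (W : ℕ → α) (i a b : ℕ) :
    factorAt W i (a + b) = factorAt W i a ++ factorAt W (i + a) b := by
  simp [factorAt, List.range_add, Function.comp_def, Nat.add_assoc]

lemma factorAt_one {α : Type*} (W : ℕ → α) (i : ℕ) : factorAt W i 1 = [W i] := by
  simp [factorAt, List.range_succ]

lemma fib_lb : ∀ n : ℕ, n + 2 ≤ Nat.fib (n + 3)
  | 0 => by decide
  | (n+1) => by
    have h1 := fib_lb n
    have h2 : Nat.fib (n+4) = Nat.fib (n+2) + Nat.fib (n+3) := Nat.fib_add_two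
    have h3 : 0 < Nat.fib (n+2) := Nat.fib_pos.2 (by omega)
    have h4 : Nat.fib (n+1+3) = Nat.fib (n+4) := rfl
    omega

lemma s_prefix_le : ∀ k m : ℕ, k ≤ m → s (k+1) <+: s (m+1) := by
  intro k m
  induction m with
  | zero => intro h; rw [Nat.le_zero.1 h]
  | succ m ih =>
    intro h
    rcases Nat.lt_or_ge k (m+1) with h' | h'
    · exact (ih (by omega)).trans ⟨s m, rfl⟩
    · have : k = m + 1 := by omega
      rw [this]

lemma coherence {m n : ℕ} (h : n < (s (m+2)).length) : (s (m+2)).getD n false = fibWord n := by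
  unfold fibWord
  have hn : n < (s (n+2)).length := by
    rw [s_length]
    exact lt_of_lt_of_le (by omega) (fib_lb n)
  rcases Nat.le_total m n with hmn | hmn
  · have hp : s (m+2) <+: s (n+2) := s_prefix_le (m+1) (n+1) (by omega)
    rw [List.getD_eq_getElem _ _ h, List.getD_eq_getElem _ _ hn, hp.getElem h]
  · have hp : s (n+2) <+: s (m+2) := s_prefix_le (n+1) (m+1) (by omega)
    rw [List.getD_eq_getElem _ _ h, List.getD_eq_getElem _ _ hn, hp.getElem hn]

lemma factorAt_zero_eq_s (m : ℕ) : factorAt fibWord 0 ((s (m+2)).length) = s (m+2) := by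
  refine List.ext_getElem (by simp) ?_
  intro j h1 h2
  have : (factorAt fibWord 0 ((s (m+2)).length))[j] = fibWord (0 + j) := by
    simp [factorAt]
  rw [this]
  rw [show (0 + j) = j by omega, ← coherence h2, List.getD_eq_getElem _ _ h2]

lemma sliceFact {α : Type*} {W : ℕ → α} {p w q : List α} {i n : ℕ}
    (h : p ++ w ++ q = factorAt W i n) : factorAt W (i + p.length) w.length = w := by
  have hlen : n = p.length + (w.length + q.length) := by
    have := congrArg List.length h
    simp at this
    omega
  rw [hlen, factorAt_append, factorAt_append, List.append_assoc] at h
  have h1 := List.append_inj h (by simp)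
  have h2 := List.append_inj h1.2 (by simp)
  exact h2.1.symm

lemma isFactor_iff_factorF (w : List Bool) : IsFactor fibWord w ↔ FactorF w := by
  constructor
  · rintro ⟨i, hi⟩
    set m := i + w.length with hm
    have hlen : i + w.length ≤ (s (m+2)).length := by
      rw [s_length]
      calc i + w.length = m := rfl
        _ ≤ m + 2 := by omega
        _ ≤ Nat.fib (m+3) := fib_lb m
    refine ⟨m, factorAt fibWord 0 i, factorAt fibWord (i + w.length) ((s (m+2)).length - (i + w.length)), ?_⟩
    rw [← hi]
    rw [← factorAt_length fibWord i w.length] at hlen ⊢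
    rw [← factorAt_zero_eq_s m]
    rw [show (s (m+2)).length = i + ((factorAt fibWord i w.length).length +
      ((s (m+2)).length - (i + (factorAt fibWord i w.length).length))) by simp at hlen ⊢; omega]
    rw [factorAt_append, factorAt_append]
    simp
    congr 1
    omega
  · rintro ⟨m, p, q, hocc⟩
    refine ⟨p.length, ?_⟩
    have h : p ++ w ++ q = factorAt fibWord 0 ((s (m+2)).length) := by
      rw [factorAt_zero_eq_s m]; exact hocc
    have := sliceFact h
    rwa [Nat.zero_add] at this

lemma pos_occurrence {w : List Bool} (h : FactorF w) :
    ∃ i, 1 ≤ i ∧ factorAt fibWord i w.length = w := by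
  obtain ⟨m, p, q, hocc⟩ := h
  have hocc2 : (s (m+3) ++ p) ++ w ++ q = s (m+4) := by
    rw [show s (m+4) = s (m+3) ++ s (m+2) from rfl, ← hocc]
    simp
  have h2 : (s (m+3) ++ p) ++ w ++ q = factorAt fibWord 0 ((s (m+4)).length) := by
    rw [factorAt_zero_eq_s (m+2)]; exact hocc2
  refine ⟨0 + (s (m+3) ++ p).length, ?_, sliceFact h2⟩
  have hlen3 : 1 ≤ (s (m+3)).length := List.length_pos_iff.2 (s_ne_nil (m+3))
  simp only [Nat.zero_add, List.length_append]
  omega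

lemma bool_resolve : ∀ a b d : Bool, a ≠ b → d ≠ b → a = d := by decide

theorem fibWord_obstruction_length_fib (v : List Bool) (hv : IsObstructionW fibWord v) :
    ∃ k : ℕ, 1 ≤ k ∧ v.length = Nat.fib (k + 1) := by
  obtain ⟨hnot, hprop⟩ := hv
  rcases v with _ | ⟨x, t⟩
  · exact absurd ⟨0, by simp [factorAt]⟩ hnot
  rcases List.eq_nil_or_concat t with rfl | ⟨u, y, rfl⟩
  · exfalso
    apply hnot
    cases x
    · exact ⟨1, by show factorAt fibWord 1 1 = [false]; rw [factorAt_one]; rfl⟩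
    · exact ⟨0, by show factorAt fibWord 0 1 = [true]; rw [factorAt_one]; rfl⟩
  simp only [List.concat_eq_append] at hnot hprop ⊢
  -- proper factors
  have hxu : IsFactor fibWord (x :: u) := by
    refine hprop (x :: u) ⟨[], [y], by simp⟩ ?_
    intro he; have := congrArg List.length he; simp at this
  have huy : IsFactor fibWord (u ++ [y]) := by
    refine hprop (u ++ [y]) ⟨[x], [], by simp⟩ ?_
    intro he; have := congrArg List.length he; simp at this
  have hxuF : FactorF (x :: u) := (isFactor_iff_factorF _).1 hxu
  have huyF : FactorF (u ++ [y]) := (isFactor_iff_factorF _).1 huy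
  -- left special
  obtain ⟨i, hi1, hi2⟩ := pos_occurrence huyF
  have hi2' : factorAt fibWord i (u.length + 1) = u ++ [y] := by simpa using hi2
  obtain ⟨i0, rfl⟩ : ∃ i0, i = i0 + 1 := ⟨i - 1, by omega⟩
  have hsplit : factorAt fibWord i0 (1 + (u.length + 1)) = [fibWord i0] ++ (u ++ [y]) := by
    rw [factorAt_append, factorAt_one, hi2']
  have hFne : fibWord i0 ≠ x := by
    intro he
    apply hnot
    refine ⟨i0, ?_⟩
    have hL : (x :: (u ++ [y])).length = 1 + (u.length + 1) := by simp; omega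
    rw [hL, hsplit, he]
    simp
  have hLspec : ∀ c : Bool, FactorF (c :: u) := by
    intro c
    by_cases hc : c = x
    · subst hc; exact hxuF
    · have hcF : c = fibWord i0 := bool_resolve c x (fibWord i0) hc hFne
      have hsplit2 : factorAt fibWord i0 ((u.length + 1) + 1) =
          factorAt fibWord i0 (u.length + 1) ++ factorAt fibWord (i0 + (u.length + 1)) 1 :=
        factorAt_append fibWord i0 (u.length + 1) 1
      have heq : factorAt fibWord i0 (u.length + 1) ++ factorAt fibWord (i0 + (u.length + 1)) 1
          = (fibWord i0 :: u) ++ [y] := by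
        rw [← hsplit2, show (u.length + 1) + 1 = 1 + (u.length + 1) by omega, hsplit]
        simp
      have h7 := (List.append_inj heq (by simp)).1
      rw [hcF]
      exact (isFactor_iff_factorF _).1 ⟨i0, by simpa using h7⟩
  -- right special
  obtain ⟨j, hj⟩ := hxu
  have hj' : factorAt fibWord j (u.length + 1) = x :: u := by simpa using hj
  have hsplit3 : factorAt fibWord j ((u.length + 1) + 1) =
      (x :: u) ++ [fibWord (j + (u.length + 1))] := by
    rw [factorAt_append, hj', factorAt_one]
  have hdne : fibWord (j + (u.length + 1)) ≠ y := by
    intro he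
    apply hnot
    refine ⟨j, ?_⟩
    have hL : (x :: (u ++ [y])).length = (u.length + 1) + 1 := by simp
    rw [hL, hsplit3, he]
    simp
  have hRspec : ∀ c : Bool, FactorF (u ++ [c]) := by
    intro c
    by_cases hc : c = y
    · subst hc; exact huyF
    · have hcd : c = fibWord (j + (u.length + 1)) :=
        bool_resolve c y _ hc hdne
      rw [hcd]
      have h5 : factorAt fibWord j (1 + (u.length + 1)) =
          [fibWord j] ++ factorAt fibWord (j + 1) (u.length + 1) := by
        rw [factorAt_append, factorAt_one]
      have h6 : [fibWord j] ++ factorAt fibWord (j + 1) (u.length + 1) =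
          [x] ++ (u ++ [fibWord (j + (u.length + 1))]) := by
        rw [← h5, show 1 + (u.length + 1) = (u.length + 1) + 1 by omega, hsplit3]
        simp
      have h8 := (List.append_inj h6 (by simp)).2
      exact (isFactor_iff_factorF _).1 ⟨j + 1, by simpa using h8⟩
  -- conclude via the bispecial classification
  obtain ⟨k, hk⟩ := bispecial_P u.length u rfl (hLspec true) (hLspec false)
    (hRspec true) (hRspec false)
  refine ⟨k + 2, by omega, ?_⟩
  have hpl := Pz_length k
  have hfib : Nat.fib (k + 2 + 1) = Nat.fib (k + 3) := rfl
  have hlen : (x :: (u ++ [y])).length = u.length + 2 := by simp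
  rw [hlen, hfib, hk, ← hpl]
end

section
/- Let A = k⟨X⟩/I be a finitely presented associative algebra with finite generating set X and ideal I generated by elements of degree at most m, and let N ≥ m. If A has no obstructions of length in the interval [N, 2N], then I has a finite Gröbner basis (with respect to the degree-lexicographic order); in particular the set of obstructions of A is finite. -/
noncomputable section

variable (k : Type) [Field k] (X : Type) [Fintype X] [LinearOrder X]

/-- The free associative algebra k⟨X⟩, realized as the monoid algebra of the free monoid. -/
abbrev FreeAlg := MonoidAlgebra k (FreeMonoid X)

/-- The degree-lexicographic strict order on monomials. -/
def DegLexLT (u v : FreeMonoid X) : Prop :=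
  u.length < v.length ∨ (u.length = v.length ∧ List.Lex (· < ·) u.toList v.toList)

/-- `w` is the leading monomial of `f` with respect to deglex. -/
def IsLeadingMonomial (f : FreeAlg k X) (w : FreeMonoid X) : Prop :=
  w ∈ f.coeff.support ∧ ∀ u ∈ f.coeff.support, u ≠ w → DegLexLT X u w

/-- `w` is `I`-reducible: it is the leading monomial of some element of `I`. -/
def IsReducible (I : TwoSidedIdeal (FreeAlg k X)) (w : FreeMonoid X) : Prop :=
  ∃ f ∈ I, IsLeadingMonomial k X f w

/-- `w` is an obstruction: `I`-reducible, but all its proper subwords are `I`-irreducible. -/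
def IsObstructionA (I : TwoSidedIdeal (FreeAlg k X)) (w : FreeMonoid X) : Prop :=
  IsReducible k X I w ∧
    ∀ u : FreeMonoid X, u.toList <:+: w.toList → u ≠ w → ¬ IsReducible k X I u

/-- `G` is a Gröbner basis of `I`: `G ⊆ I`, and the leading monomial of every nonzero
element of `I` contains the leading monomial of some element of `G` as a subword. -/
def IsGroebnerBasis (I : TwoSidedIdeal (FreeAlg k X)) (G : Set (FreeAlg k X)) : Prop :=
  G ⊆ (I : Set (FreeAlg k X)) ∧
    ∀ f ∈ I, f ≠ 0 → ∃ g ∈ G, ∃ wf wg : FreeMonoid X,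
      IsLeadingMonomial k X f wf ∧ IsLeadingMonomial k X g wg ∧ wg.toList <:+: wf.toList

end
set_option linter.unusedSectionVars false
set_option maxHeartbeats 1000000

section Part1
open FreeMonoid

variable {k : Type} [Field k] {X : Type} [Fintype X] [LinearOrder X]

theorem dlt_trans {u v w : FreeMonoid X} (h1 : DegLexLT X u v) (h2 : DegLexLT X v w) :
    DegLexLT X u w := by
  rcases h1 with h1 | ⟨e1, l1⟩ <;> rcases h2 with h2 | ⟨e2, l2⟩
  · exact Or.inl (h1.trans h2)
  · exact Or.inl (e2 ▸ h1)
  · exact Or.inl (e1 ▸ h2)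
  · exact Or.inr ⟨e1.trans e2, List.lex_trans lt_trans l1 l2⟩

theorem dlt_irrefl (u : FreeMonoid X) : ¬ DegLexLT X u u := by
  rintro (h | ⟨-, h⟩)
  · exact lt_irrefl _ h
  · exact (irrefl_of (List.Lex (· < ·)) _) h

theorem dlt_trichotomy (u v : FreeMonoid X) :
    DegLexLT X u v ∨ u = v ∨ DegLexLT X v u := by
  rcases lt_trichotomy u.length v.length with h | h | h
  · exact Or.inl (Or.inl h)
  · rcases trichotomous_of (List.Lex (· < ·)) u.toList v.toList with l | l | l
    · exact Or.inl (Or.inr ⟨h, l⟩)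
    · exact Or.inr (Or.inl (FreeMonoid.toList.injective l))
    · exact Or.inr (Or.inr (Or.inr ⟨h.symm, l⟩))
  · exact Or.inr (Or.inr (Or.inl h))

theorem dlt_length_le {u v : FreeMonoid X} (h : DegLexLT X u v) : u.length ≤ v.length := by
  rcases h with h | ⟨e, -⟩
  · exact h.le
  · exact e.le

theorem dlt_of_length_lt {u v : FreeMonoid X} (h : u.length < v.length) : DegLexLT X u v :=
  Or.inl h

theorem dlt_ne {u v : FreeMonoid X} (h : DegLexLT X u v) : u ≠ v := by
  rintro rfl; exact dlt_irrefl u h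

/-- The set of words deglex-below `v` is finite. -/
theorem dlt_downset_finite (v : FreeMonoid X) : {u : FreeMonoid X | DegLexLT X u v}.Finite := by
  have : {u : FreeMonoid X | DegLexLT X u v} ⊆
      (fun l : List X => (FreeMonoid.ofList l)) '' {l : List X | l.length ≤ v.length} := by
    intro u hu
    exact ⟨u.toList, dlt_length_le hu, rfl⟩
  exact Set.Finite.subset (Set.Finite.image _ (List.finite_length_le X v.length)) this

noncomputable def dltRank (v : FreeMonoid X) : ℕ := {u : FreeMonoid X | DegLexLT X u v}.ncard

theorem dltRank_lt {u v : FreeMonoid X} (h : DegLexLT X u v) : dltRank u < dltRank v := by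
  apply Set.ncard_lt_ncard _ (dlt_downset_finite v)
  constructor
  · exact fun w hw => dlt_trans hw h
  · intro hsub
    exact dlt_irrefl u (hsub h)

theorem dlt_wf : WellFounded (DegLexLT (X := X)) := by
  have : Subrelation (DegLexLT (X := X)) (InvImage (· < ·) dltRank) := by
    intro u v h; exact dltRank_lt h
  exact Subrelation.wf this (InvImage.wf _ Nat.lt_wfRel.wf)

theorem dlt_mul_right {u v b : FreeMonoid X} (h : DegLexLT X u v) :
    DegLexLT X (u * b) (v * b) := by
  rcases h with h | ⟨e, l⟩
  · exact Or.inl (by simp [FreeMonoid.length_mul]; omega)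
  · refine Or.inr ⟨by simp [FreeMonoid.length_mul, e], ?_⟩
    have key : ∀ (l₁ l₂ : List X), List.Lex (· < ·) l₁ l₂ → l₁.length = l₂.length →
        List.Lex (· < ·) (l₁ ++ b.toList) (l₂ ++ b.toList) := by
      intro l₁ l₂ hl
      induction hl with
      | nil => intro e; simp at e
      | cons h ih => intro e; exact List.Lex.cons (ih (by simpa using e))
      | rel h => intro _; exact List.Lex.rel h
    exact key _ _ l e

theorem dlt_mul_left {u v a : FreeMonoid X} (h : DegLexLT X u v) :
    DegLexLT X (a * u) (a * v) := by
  rcases h with h | ⟨e, l⟩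
  · exact Or.inl (by simp [FreeMonoid.length_mul]; omega)
  · refine Or.inr ⟨by simp [FreeMonoid.length_mul, e], ?_⟩
    show List.Lex _ (a.toList ++ u.toList) (a.toList ++ v.toList)
    induction a.toList with
    | nil => exact l
    | cons x t ih => exact List.Lex.cons ih

theorem dlt_mul {u v a b : FreeMonoid X} (h : DegLexLT X u v) :
    DegLexLT X (a * u * b) (a * v * b) :=
  dlt_mul_right (dlt_mul_left h)

end Part1
section Part2
attribute [local instance] Classical.propDecidable
open FreeMonoid MonoidAlgebra

variable {k : Type} [Field k] {X : Type} [Fintype X] [LinearOrder X]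

/-- The monomial `single a 1`. -/
noncomputable def sm (a : FreeMonoid X) : FreeAlg k X := MonoidAlgebra.single a 1

theorem conj_inj (a b : FreeMonoid X) : Function.Injective (fun u : FreeMonoid X => a * u * b) := by
  intro u v h
  simp only at h
  exact mul_left_cancel (mul_right_cancel h)

theorem conj_eq_mapDomain (a b : FreeMonoid X) (f : FreeAlg k X) :
    (sm a * f * sm b : FreeAlg k X) = MonoidAlgebra.mapDomain (fun u => a * u * b) f := by
  induction f using MonoidAlgebra.induction_linear with
  | zero => simp [MonoidAlgebra.mapDomain_zero]
  | add f g hf hg => rw [mul_add, add_mul, hf, hg, MonoidAlgebra.mapDomain_add]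
  | single u c =>
      rw [MonoidAlgebra.mapDomain_single]
      show (MonoidAlgebra.single a 1) * (MonoidAlgebra.single u c) * (MonoidAlgebra.single b 1) = _
      rw [MonoidAlgebra.single_mul_single, MonoidAlgebra.single_mul_single]
      simp

theorem conj_apply (a b u : FreeMonoid X) (f : FreeAlg k X) :
    (sm a * f * sm b : FreeAlg k X).coeff (a * u * b) = f.coeff u := by
  rw [conj_eq_mapDomain]
  exact Finsupp.mapDomain_apply (conj_inj a b) f.coeff u

theorem conj_support (a b : FreeMonoid X) (f : FreeAlg k X) :
    (sm a * f * sm b : FreeAlg k X).coeff.support = f.coeff.support.image (fun u => a * u * b) := by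
  rw [conj_eq_mapDomain]
  exact Finsupp.mapDomain_support_of_injective (conj_inj a b) f.coeff

theorem finset_exists_max (s : Finset (FreeMonoid X)) (h : s.Nonempty) :
    ∃ w ∈ s, ∀ u ∈ s, u ≠ w → DegLexLT X u w := by
  classical
  induction s using Finset.induction with
  | empty => exact absurd h (by simp)
  | @insert a s ha ih =>
      rcases s.eq_empty_or_nonempty with rfl | hs
      · exact ⟨a, by simp, by simp⟩
      · obtain ⟨w, hw, hmax⟩ := ih hs
        rcases dlt_trichotomy a w with hc | heq | hc
        · refine ⟨w, by simp [hw], ?_⟩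
          intro u hu hne
          rcases Finset.mem_insert.1 hu with rfl | hu
          · exact hc
          · exact hmax u hu hne
        · subst heq
          refine ⟨a, by simp, ?_⟩
          intro u hu hne
          rcases Finset.mem_insert.1 hu with rfl | hu
          · exact absurd rfl hne
          · exact hmax u hu hne
        · refine ⟨a, by simp, ?_⟩
          intro u hu hne
          rcases Finset.mem_insert.1 hu with rfl | hu
          · exact absurd rfl hne
          · rcases eq_or_ne u w with rfl | hne'
            · exact hc
            · exact dlt_trans (hmax u hu hne') hc

theorem exists_lm {f : FreeAlg k X} (h : f ≠ 0) : ∃ w, IsLeadingMonomial k X f w := by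
  obtain ⟨w, hw, hmax⟩ := finset_exists_max f.coeff.support (Finsupp.support_nonempty_iff.2 (mt MonoidAlgebra.coeff_eq_zero.1 h))
  exact ⟨w, hw, hmax⟩

theorem lm_unique {f : FreeAlg k X} {w w' : FreeMonoid X}
    (h : IsLeadingMonomial k X f w) (h' : IsLeadingMonomial k X f w') : w = w' := by
  by_contra hne
  exact dlt_irrefl _ (dlt_trans (h.2 w' h'.1 (Ne.symm hne)) (h'.2 w h.1 hne))

theorem reducible_conj {I : TwoSidedIdeal (FreeAlg k X)} {w : FreeMonoid X}
    (h : IsReducible k X I w) (a b : FreeMonoid X) : IsReducible k X I (a * w * b) := by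
  obtain ⟨f, hfI, hfw, hmax⟩ := h
  refine ⟨sm a * f * sm b, I.mul_mem_right _ _ (I.mul_mem_left _ _ hfI), ?_, ?_⟩
  · rw [Finsupp.mem_support_iff, conj_apply]
    exact Finsupp.mem_support_iff.1 hfw
  · intro u hu hne
    rw [conj_support, Finset.mem_image] at hu
    obtain ⟨v, hv, rfl⟩ := hu
    refine dlt_mul (hmax v hv ?_)
    rintro rfl; exact hne rfl

theorem reducible_of_infix {I : TwoSidedIdeal (FreeAlg k X)} {w v : FreeMonoid X}
    (hinf : w.toList <:+: v.toList) (h : IsReducible k X I w) : IsReducible k X I v := by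
  obtain ⟨s, t, hst⟩ := hinf
  have : v = FreeMonoid.ofList s * w * FreeMonoid.ofList t := by
    apply FreeMonoid.toList.injective
    simp only [FreeMonoid.toList_mul]
    rw [← hst]
    simp [List.append_assoc]
  rw [this]
  exact reducible_conj h _ _

theorem reducible_contains_obstruction {I : TwoSidedIdeal (FreeAlg k X)} :
    ∀ n (w : FreeMonoid X), w.length ≤ n → IsReducible k X I w →
    ∃ t : FreeMonoid X, IsObstructionA k X I t ∧ t.toList <:+: w.toList := by
  intro n
  induction n with
  | zero =>
      intro w hw hred
      refine ⟨w, ⟨hred, ?_⟩, List.infix_rfl⟩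
      intro u hu hne
      exfalso
      apply hne
      apply FreeMonoid.toList.injective
      have h2 : w.toList.length = 0 := Nat.le_zero.1 hw
      rw [List.length_eq_zero_iff.1 h2] at hu ⊢
      simpa using hu
  | succ n ih =>
      intro w hw hred
      by_cases hob : ∀ u : FreeMonoid X, u.toList <:+: w.toList → u ≠ w → ¬ IsReducible k X I u
      · exact ⟨w, ⟨hred, hob⟩, List.infix_rfl⟩
      · push_neg at hob
        obtain ⟨u, huinf, hune, hured⟩ := hob
        have hlt : u.length < w.length := by
          have hle : u.toList.length ≤ w.toList.length := huinf.length_le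
          rcases lt_or_eq_of_le hle with h | h
          · exact h
          · exact absurd (FreeMonoid.toList.injective (huinf.eq_of_length h)) hune
        obtain ⟨t, hob, htinf⟩ := ih u (by omega) hured
        exact ⟨t, hob, htinf.trans huinf⟩

end Part2
section Part3
set_option linter.unusedSectionVars false
attribute [local instance] Classical.propDecidable
open FreeMonoid MonoidAlgebra

variable {k : Type} [Field k] {X : Type} [Fintype X] [LinearOrder X]

/-- deglex less-or-equal. -/
def dle (X : Type) [Fintype X] [LinearOrder X] (u v : FreeMonoid X) : Prop :=
  DegLexLT X u v ∨ u = v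

theorem dle_refl (u : FreeMonoid X) : dle X u u := Or.inr rfl

theorem dle_trans {u v w : FreeMonoid X} (h1 : dle X u v) (h2 : dle X v w) : dle X u w := by
  rcases h1 with h1 | rfl
  · rcases h2 with h2 | rfl
    · exact Or.inl (dlt_trans h1 h2)
    · exact Or.inl h1
  · exact h2

theorem dle_trans_dlt {u v w : FreeMonoid X} (h1 : dle X u v) (h2 : DegLexLT X v w) :
    DegLexLT X u w := by
  rcases h1 with h1 | rfl
  · exact dlt_trans h1 h2
  · exact h2

theorem dlt_trans_dle {u v w : FreeMonoid X} (h1 : DegLexLT X u v) (h2 : dle X v w) :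
    DegLexLT X u w := by
  rcases h2 with h2 | rfl
  · exact dlt_trans h1 h2
  · exact h1

theorem dle_of_dlt {u v : FreeMonoid X} (h : DegLexLT X u v) : dle X u v := Or.inl h

theorem dlt_of_dle_of_ne {u v : FreeMonoid X} (h : dle X u v) (hne : u ≠ v) : DegLexLT X u v := by
  rcases h with h | rfl
  · exact h
  · exact absurd rfl hne

theorem sm_mul (a b : FreeMonoid X) : (sm (a * b) : FreeAlg k X) = sm a * sm b := by
  show MonoidAlgebra.single (a * b) (1 : k) = _
  rw [show (sm a : FreeAlg k X) * sm b
      = MonoidAlgebra.single a 1 * MonoidAlgebra.single b 1 from rfl,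
    MonoidAlgebra.single_mul_single, one_mul]

theorem sm_one : (sm 1 : FreeAlg k X) = 1 := rfl

/-- The word associated to a representation datum `(c, t, a, b)`, namely `a * t * b`. -/
def wrd (p : k × FreeMonoid X × FreeMonoid X × FreeMonoid X) : FreeMonoid X :=
  p.2.2.1 * p.2.1 * p.2.2.2

/-- The algebra element associated to a datum: `c • (a ⬝ g t ⬝ b)`. -/
noncomputable def phi (g : FreeMonoid X → FreeAlg k X)
    (p : k × FreeMonoid X × FreeMonoid X × FreeMonoid X) : FreeAlg k X :=
  p.1 • ((sm p.2.2.1 : FreeAlg k X) * g p.2.1 * sm p.2.2.2)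

/-- Sum of a list of representation data. -/
noncomputable def sumL (g : FreeMonoid X → FreeAlg k X)
    (L : List (k × FreeMonoid X × FreeMonoid X × FreeMonoid X)) : FreeAlg k X :=
  (L.map (phi g)).sum

/-- `w` contains no subword from `O`. -/
def Onml (O : Set (FreeMonoid X)) (w : FreeMonoid X) : Prop :=
  ¬ ∃ t ∈ O, t.toList <:+: w.toList

/-- Hypotheses on the chosen reducers `g t`, `t ∈ O`:
they lie in `I`, are monic with leading monomial `t`. -/
structure Hyp (I : TwoSidedIdeal (FreeAlg k X)) (O : Set (FreeMonoid X))
    (g : FreeMonoid X → FreeAlg k X) : Prop where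
  mem : ∀ t ∈ O, g t ∈ I
  coeff : ∀ t ∈ O, (g t : FreeAlg k X).coeff t = 1
  lt : ∀ t ∈ O, ∀ u ∈ (g t).coeff.support, u ≠ t → DegLexLT X u t

theorem sumL_nil (g : FreeMonoid X → FreeAlg k X) : sumL g [] = 0 := rfl

theorem sumL_cons (g : FreeMonoid X → FreeAlg k X) (p) (L) :
    sumL g (p :: L) = phi g p + sumL g L := by simp [sumL]

theorem sumL_append (g : FreeMonoid X → FreeAlg k X) (L₁ L₂) :
    sumL g (L₁ ++ L₂) = sumL g L₁ + sumL g L₂ := by simp [sumL]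

theorem sumL_perm (g : FreeMonoid X → FreeAlg k X) {L₁ L₂} (h : L₁.Perm L₂) :
    sumL g L₁ = sumL g L₂ := (h.map (phi g)).sum_eq

variable {I : TwoSidedIdeal (FreeAlg k X)} {O : Set (FreeMonoid X)}
  {g : FreeMonoid X → FreeAlg k X}

theorem smul_mem_I {c : k} {x : FreeAlg k X} (hx : x ∈ I) : c • x ∈ I := by
  have h : c • x = (c • (1 : FreeAlg k X)) * x := by rw [smul_mul_assoc, one_mul]
  rw [h]
  exact I.mul_mem_left _ _ hx

theorem phi_mem (H : Hyp I O g) {p} (hp : p.2.1 ∈ O) : phi g p ∈ I := by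
  have h1 : (sm p.2.2.1 : FreeAlg k X) * g p.2.1 * sm p.2.2.2 ∈ I :=
    I.mul_mem_right _ _ (I.mul_mem_left _ _ (H.mem _ hp))
  exact smul_mem_I h1

theorem sumL_mem (H : Hyp I O g) {L} (hL : ∀ p ∈ L, p.2.1 ∈ O) : sumL g L ∈ I := by
  induction L with
  | nil => exact I.zero_mem
  | cons p L ih =>
      rw [sumL_cons]
      exact I.add_mem (phi_mem H (hL p (by simp))) (ih (fun q hq => hL q (by simp [hq])))

theorem phi_supp (H : Hyp I O g) {p} (hp : p.2.1 ∈ O) :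
    ∀ u ∈ (phi g p).coeff.support, dle X u (wrd p) := by
  intro u hu
  have h1 : u ∈ ((sm p.2.2.1 : FreeAlg k X) * g p.2.1 * sm p.2.2.2).coeff.support :=
    Finsupp.support_smul hu
  rw [conj_support] at h1
  obtain ⟨v, hv, rfl⟩ := Finset.mem_image.1 h1
  rcases eq_or_ne v p.2.1 with rfl | hne
  · exact dle_refl _
  · exact Or.inl (dlt_mul (H.lt _ hp v hv hne))

theorem phi_coeff_self (H : Hyp I O g) {p} (hp : p.2.1 ∈ O) :
    (phi g p : FreeAlg k X).coeff (wrd p) = p.1 := by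
  show ((p.1 • ((sm p.2.2.1 : FreeAlg k X) * g p.2.1 * sm p.2.2.2) : FreeAlg k X)).coeff (wrd p) = p.1
  rw [show (((p.1 • ((sm p.2.2.1 : FreeAlg k X) * g p.2.1 * sm p.2.2.2) : FreeAlg k X)).coeff (wrd p))
      = p.1 * ((sm p.2.2.1 * g p.2.1 * sm p.2.2.2 : FreeAlg k X).coeff (wrd p)) from rfl]
  rw [show wrd p = p.2.2.1 * p.2.1 * p.2.2.2 from rfl, conj_apply, H.coeff _ hp, mul_one]

theorem phi_coeff_lt (H : Hyp I O g) {p} (hp : p.2.1 ∈ O) {W : FreeMonoid X}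
    (hW : DegLexLT X (wrd p) W) : (phi g p : FreeAlg k X).coeff W = 0 := by
  by_contra h0
  have hu : W ∈ (phi g p).coeff.support := Finsupp.mem_support_iff.2 h0
  exact dlt_irrefl W (dle_trans_dlt (phi_supp H hp W hu) hW)

theorem sumL_supp (H : Hyp I O g) {L} (hL : ∀ p ∈ L, p.2.1 ∈ O) :
    ∀ u ∈ (sumL g L).coeff.support, ∃ p ∈ L, dle X u (wrd p) := by
  induction L with
  | nil => simp [sumL_nil]
  | cons q L ih =>
      intro u hu
      rw [sumL_cons] at hu
      rcases Finset.mem_union.1 (Finsupp.support_add hu) with h | h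
      · exact ⟨q, by simp, phi_supp H (hL q (by simp)) u h⟩
      · obtain ⟨p, hpL, hp⟩ := ih (fun r hr => hL r (by simp [hr])) u h
        exact ⟨p, by simp [hpL], hp⟩

theorem sumL_coeff_apply (g : FreeMonoid X → FreeAlg k X) (L) (W : FreeMonoid X) :
    (sumL g L : FreeAlg k X).coeff W = ((L.map (fun p => (phi g p : FreeAlg k X).coeff W))).sum := by
  induction L with
  | nil => simp [sumL_nil]
  | cons q L ih =>
      have : (sumL g (q :: L) : FreeAlg k X).coeff W
          = (phi g q : FreeAlg k X).coeff W + (sumL g L : FreeAlg k X).coeff W := by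
        rw [sumL_cons]; rfl
      rw [this, ih, List.map_cons, List.sum_cons]

theorem sumL_coeff (H : Hyp I O g) {L} {W : FreeMonoid X}
    (hL : ∀ p ∈ L, p.2.1 ∈ O ∧ dle X (wrd p) W) :
    (sumL g L : FreeAlg k X).coeff W = ((L.filter (fun p => wrd p = W)).map (fun p => p.1)).sum := by
  induction L with
  | nil => simp [sumL_nil]
  | cons q L ih =>
      have hq := hL q (by simp)
      have hcoeff : (sumL g (q :: L) : FreeAlg k X).coeff W
          = (phi g q : FreeAlg k X).coeff W + (sumL g L : FreeAlg k X).coeff W := by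
        rw [sumL_cons]; rfl
      rw [hcoeff, ih (fun r hr => hL r (by simp [hr]))]
      by_cases hw : wrd q = W
      · rw [List.filter_cons_of_pos (by simp [hw]), List.map_cons, List.sum_cons]
        rw [← hw, phi_coeff_self H hq.1]
      · rw [List.filter_cons_of_neg (by simp [hw]),
          phi_coeff_lt H hq.1 (dlt_of_dle_of_ne hq.2 hw), zero_add]

theorem mul_expand (x D y : FreeAlg k X) :
    x * D * y = ((D.coeff.support.toList).map
      (fun u => (D.coeff u : k) • (x * (sm u : FreeAlg k X) * y))).sum := by
  conv_lhs => rw [← MonoidAlgebra.sum_coeff_single D]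
  rw [Finsupp.sum, Finset.mul_sum, Finset.sum_mul, ← Finset.sum_map_toList]
  congr 1
  apply List.map_congr_left
  intro u hu
  have h2 : (MonoidAlgebra.single u (D.coeff u)) = (D.coeff u) • (sm u : FreeAlg k X) := by
    rw [show (sm u : FreeAlg k X) = MonoidAlgebra.single u (1:k) from rfl, MonoidAlgebra.smul_single', mul_one]
  rw [h2, mul_smul_comm, smul_mul_assoc]

theorem expand_left (x z : FreeAlg k X) :
    x * z = ((x.coeff.support.toList).map (fun u => (x.coeff u : k) • ((sm u : FreeAlg k X) * z))).sum := by
  have e : (1 : FreeAlg k X) * x * z = x * z := by rw [one_mul]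
  rw [← e, mul_expand]
  congr 1
  apply List.map_congr_left
  intro u hu
  rw [one_mul]

theorem expand_right (x z : FreeAlg k X) :
    z * x = ((x.coeff.support.toList).map (fun u => (x.coeff u : k) • (z * (sm u : FreeAlg k X)))).sum := by
  have e : z * x * 1 = z * x := by rw [mul_one]
  rw [← e, mul_expand]
  congr 1
  apply List.map_congr_left
  intro u hu
  rw [mul_one]

end Part3
section Part3b
set_option linter.unusedSectionVars false
attribute [local instance] Classical.propDecidable
open FreeMonoid MonoidAlgebra

variable {k : Type} [Field k] {X : Type} [Fintype X] [LinearOrder X]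
variable {I : TwoSidedIdeal (FreeAlg k X)} {O : Set (FreeMonoid X)}
  {g : FreeMonoid X → FreeAlg k X}

theorem infix_decomp {t w : FreeMonoid X} (h : t.toList <:+: w.toList) :
    ∃ a b : FreeMonoid X, w = a * t * b := by
  obtain ⟨s, r, hsr⟩ := h
  refine ⟨FreeMonoid.ofList s, FreeMonoid.ofList r, FreeMonoid.toList.injective ?_⟩
  simp only [FreeMonoid.toList_mul, FreeMonoid.toList_ofList]
  exact hsr.symm

/-- Normal form: any element with support strictly below `V` can be reduced, modulo
a representation with words strictly below `V`, to an element whose support avoids `O`. -/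
theorem nf (H : Hyp I O g) (V : FreeMonoid X) :
    ∀ n (h : FreeAlg k X), (∀ w ∈ h.coeff.support, DegLexLT X w V) →
    (∀ w ∈ h.coeff.support, ¬ Onml O w → dltRank w < n) →
    ∃ L : List (k × FreeMonoid X × FreeMonoid X × FreeMonoid X),
      (∀ p ∈ L, p.2.1 ∈ O ∧ DegLexLT X (wrd p) V) ∧
      (∀ w ∈ (h - sumL g L).coeff.support, Onml O w) := by
  intro n
  induction n using Nat.strong_induction_on with
  | _ n ih =>
    intro h hV hrank
    by_cases hall : ∀ w ∈ h.coeff.support, Onml O w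
    · refine ⟨[], by simp, ?_⟩
      rw [sumL_nil, sub_zero]
      exact hall
    · push_neg at hall
      have hbad : (h.coeff.support.filter (fun w => ¬ Onml O w)).Nonempty := by
        obtain ⟨w, hw, hnw⟩ := hall
        exact ⟨w, Finset.mem_filter.2 ⟨hw, hnw⟩⟩
      obtain ⟨w, hwmem, hwmax⟩ := finset_exists_max _ hbad
      obtain ⟨hwsupp, hwbad⟩ := Finset.mem_filter.1 hwmem
      obtain ⟨t, htO, htinf⟩ := not_not.1 hwbad
      obtain ⟨a, b, hw_eq⟩ := infix_decomp htinf
      set p : k × FreeMonoid X × FreeMonoid X × FreeMonoid X := (h.coeff w, t, a, b) with hp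
      have hpO : p.2.1 ∈ O := htO
      have hwrd : wrd p = w := hw_eq.symm
      set h₁ := h - phi g p with hh₁
      have hco : (phi g p : FreeAlg k X).coeff w = h.coeff w := by
        conv_lhs => rw [← hwrd]
        rw [phi_coeff_self H hpO]
      have h1w : (h₁ : FreeAlg k X).coeff w = 0 := by
        rw [hh₁, MonoidAlgebra.coeff_sub, Finsupp.sub_apply, hco, sub_self]
      have hsupp₁ : ∀ u ∈ h₁.coeff.support, u ≠ w ∧ (u ∈ h.coeff.support ∨ DegLexLT X u w) := by
        intro u hu
        have hne : u ≠ w := by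
          rintro rfl
          exact (Finsupp.mem_support_iff.1 hu) h1w
        refine ⟨hne, ?_⟩
        by_cases hus : u ∈ h.coeff.support
        · exact Or.inl hus
        · right
          have hphi : (phi g p : FreeAlg k X).coeff u ≠ 0 := by
            have hu' := Finsupp.mem_support_iff.1 hu
            rw [hh₁, MonoidAlgebra.coeff_sub, Finsupp.sub_apply] at hu'
            rw [Finsupp.notMem_support_iff.1 hus, zero_sub] at hu'
            intro h0
            rw [h0, neg_zero] at hu'
            exact hu' rfl
          have := phi_supp H hpO u (Finsupp.mem_support_iff.2 hphi)
          rw [hwrd] at this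
          exact dlt_of_dle_of_ne this hne
      have hV₁ : ∀ u ∈ h₁.coeff.support, DegLexLT X u V := by
        intro u hu
        rcases (hsupp₁ u hu).2 with h' | h'
        · exact hV u h'
        · exact dlt_trans h' (hV w hwsupp)
      have hrank₁ : ∀ u ∈ h₁.coeff.support, ¬ Onml O u → dltRank u < dltRank w := by
        intro u hu hnml
        obtain ⟨hne, hcase⟩ := hsupp₁ u hu
        rcases hcase with h' | h'
        · exact dltRank_lt (hwmax u (Finset.mem_filter.2 ⟨h', hnml⟩) hne)
        · exact dltRank_lt h'
      obtain ⟨L₁, hL₁, hnml₁⟩ := ih (dltRank w) (hrank w hwsupp hwbad) h₁ hV₁ hrank₁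
      refine ⟨p :: L₁, ?_, ?_⟩
      · intro q hq
        rcases List.mem_cons.1 hq with rfl | hq'
        · exact ⟨hpO, hwrd ▸ hV w hwsupp⟩
        · exact hL₁ q hq'
      · rw [sumL_cons, sub_add_eq_sub_sub]
        exact hnml₁

/-- The key reduction-to-zero lemma: any element of `I` supported strictly below `V ⪯ o`
is a combination of the reducers with words strictly below `V`. -/
theorem star (H : Hyp I O g) {o : FreeMonoid X}
    (hOmin : ∀ t, IsObstructionA k X I t → DegLexLT X t o → t ∈ O)
    {V : FreeMonoid X} (hVo : dle X V o) {h : FreeAlg k X} (hI : h ∈ I)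
    (hs : ∀ w ∈ h.coeff.support, DegLexLT X w V) :
    ∃ L : List (k × FreeMonoid X × FreeMonoid X × FreeMonoid X),
      (∀ p ∈ L, p.2.1 ∈ O ∧ DegLexLT X (wrd p) V) ∧ h = sumL g L := by
  obtain ⟨L, hL, hnml⟩ := nf H V (h.coeff.support.sup dltRank + 1) h hs
    (fun w hw _ => Nat.lt_succ_of_le (Finset.le_sup hw))
  refine ⟨L, hL, ?_⟩
  set r := h - sumL g L with hr
  rcases eq_or_ne r 0 with h0 | h0
  · exact (sub_eq_zero.1 h0)
  obtain ⟨u, hulm⟩ := exists_lm h0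
  have humem : u ∈ r.coeff.support := hulm.1
  have huV : DegLexLT X u V := by
    have : u ∈ h.coeff.support ∪ (sumL g L).coeff.support := Finsupp.support_sub humem
    rcases Finset.mem_union.1 this with h' | h'
    · exact hs u h'
    · obtain ⟨q, hqL, hq⟩ := sumL_supp H (fun q hq => (hL q hq).1) u h'
      exact dle_trans_dlt hq (hL q hqL).2
  have huo : DegLexLT X u o := dlt_trans_dle huV hVo
  have hured : IsReducible k X I u :=
    ⟨r, I.sub_mem hI (sumL_mem H (fun q hq => (hL q hq).1)), hulm⟩
  obtain ⟨t, htobs, htinf⟩ := reducible_contains_obstruction u.length u le_rfl hured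
  have htO : t ∈ O := by
    apply hOmin t htobs
    rcases lt_or_eq_of_le htinf.length_le with hlen | hlen
    · exact dlt_of_length_lt (lt_of_lt_of_le hlen (dlt_length_le huo))
    · rw [FreeMonoid.toList.injective (htinf.eq_of_length hlen)]
      exact huo
  exact absurd ⟨t, htO, htinf⟩ (hnml u humem)

end Part3b
section Part3c
set_option linter.unusedSectionVars false
attribute [local instance] Classical.propDecidable
open FreeMonoid MonoidAlgebra

theorem list_two_occ {α : Type} {A₁ T₁ B₁ A₂ T₂ B₂ : List α}
    (he : A₁ ++ T₁ ++ B₁ = A₂ ++ T₂ ++ B₂) (hle : A₁.length ≤ A₂.length) :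
    (∃ C, A₂ = A₁ ++ T₁ ++ C ∧ B₁ = C ++ T₂ ++ B₂)
    ∨ (∃ x y z, T₁ = x ++ y ∧ T₂ = y ++ z ∧ A₂ = A₁ ++ x ∧ B₁ = z ++ B₂ ∧ y ≠ [] ∧ z ≠ [])
    ∨ (T₁ = T₂ ∧ A₁ = A₂ ∧ B₁ = B₂)
    ∨ (T₂.length < T₁.length ∧ T₂ <:+: T₁) := by
  have p1 : A₁ <+: A₂ ++ T₂ ++ B₂ := ⟨T₁ ++ B₁, by rw [← List.append_assoc]; exact he⟩
  have p2 : A₂ <+: A₂ ++ T₂ ++ B₂ := ⟨T₂ ++ B₂, by rw [List.append_assoc]⟩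
  obtain ⟨x, rfl⟩ := List.prefix_of_prefix_length_le p1 p2 hle
  have he' : T₁ ++ B₁ = x ++ (T₂ ++ B₂) := by
    apply List.append_cancel_left (as := A₁)
    rw [← List.append_assoc, he]
    simp [List.append_assoc]
  by_cases hTx : T₁.length ≤ x.length
  · -- disjoint case
    have q1 : T₁ <+: x ++ (T₂ ++ B₂) := ⟨B₁, he'⟩
    have q2 : x <+: x ++ (T₂ ++ B₂) := ⟨T₂ ++ B₂, rfl⟩
    obtain ⟨C, rfl⟩ := List.prefix_of_prefix_length_le q1 q2 hTx
    left
    refine ⟨C, by rw [List.append_assoc], ?_⟩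
    have h2 : B₁ = C ++ (T₂ ++ B₂) := by
      apply List.append_cancel_left (as := T₁)
      rw [he', List.append_assoc]
    rw [h2, List.append_assoc]
  · push_neg at hTx
    have q1 : x <+: T₁ ++ B₁ := ⟨T₂ ++ B₂, he'.symm⟩
    have q2 : T₁ <+: T₁ ++ B₁ := ⟨B₁, rfl⟩
    obtain ⟨y', rfl⟩ := List.prefix_of_prefix_length_le q1 q2 hTx.le
    have hy' : y' ≠ [] := by
      intro h; rw [h, List.append_nil] at hTx; exact lt_irrefl _ hTx
    have he'' : y' ++ B₁ = T₂ ++ B₂ := by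
      apply List.append_cancel_left (as := x)
      rw [← List.append_assoc]
      exact he'
    by_cases hyT : y'.length ≤ T₂.length
    · have r1 : y' <+: T₂ ++ B₂ := ⟨B₁, he''⟩
      have r2 : T₂ <+: T₂ ++ B₂ := ⟨B₂, rfl⟩
      obtain ⟨z, rfl⟩ := List.prefix_of_prefix_length_le r1 r2 hyT
      have hB : B₁ = z ++ B₂ := by
        apply List.append_cancel_left (as := y')
        rw [← List.append_assoc]
        exact he''
      rcases eq_or_ne z [] with rfl | hz
      · rcases eq_or_ne x [] with rfl | hx
        · right; right; left
          refine ⟨by simp, by simp, by simpa using hB⟩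
        · right; right; right
          rw [List.append_nil]
          constructor
          · conv_rhs => rw [List.length_append]
            have : 0 < x.length := List.length_pos_iff.2 hx
            omega
          · exact ⟨x, [], by simp⟩
      · right; left
        exact ⟨x, y', z, rfl, rfl, rfl, hB, hy', hz⟩
    · push_neg at hyT
      have r1 : T₂ <+: y' ++ B₁ := ⟨B₂, he''.symm⟩
      have r2 : y' <+: y' ++ B₁ := ⟨B₁, rfl⟩
      have hT₂y := List.prefix_of_prefix_length_le r1 r2 hyT.le
      right; right; right
      constructor
      · calc T₂.length < y'.length := hyT
          _ ≤ (x ++ y').length := by simp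
      · exact hT₂y.isInfix.trans ⟨x, [], by simp⟩
end Part3c
section Part3d
set_option linter.unusedSectionVars false
set_option maxHeartbeats 1000000
attribute [local instance] Classical.propDecidable
open FreeMonoid MonoidAlgebra

variable {k : Type} [Field k] {X : Type} [Fintype X] [LinearOrder X]
variable {I : TwoSidedIdeal (FreeAlg k X)} {O : Set (FreeMonoid X)}
  {g : FreeMonoid X → FreeAlg k X}

theorem mul_sm_coeff (f : FreeAlg k X) (b u : FreeMonoid X) :
    (f * sm b : FreeAlg k X).coeff (u * b) = f.coeff u := by
  have h := conj_apply 1 b u f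
  simp only [one_mul] at h
  rw [← h, sm_one, one_mul]

theorem sm_mul_coeff (f : FreeAlg k X) (a u : FreeMonoid X) :
    ((sm a : FreeAlg k X) * f).coeff (a * u) = f.coeff u := by
  have h := conj_apply a 1 u f
  simp only [mul_one] at h
  rw [← h, sm_one, mul_one]

theorem mul_sm_supp (f : FreeAlg k X) (b : FreeMonoid X) :
    ∀ w ∈ (f * sm b : FreeAlg k X).coeff.support, ∃ u ∈ f.coeff.support, w = u * b := by
  intro w hw
  have hw' : w ∈ ((sm 1 : FreeAlg k X) * f * sm b).coeff.support := by rwa [sm_one, one_mul]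
  rw [conj_support] at hw'
  obtain ⟨u, hu, huw⟩ := Finset.mem_image.1 hw'
  exact ⟨u, hu, by rw [← huw, one_mul]⟩

theorem sm_mul_supp (f : FreeAlg k X) (a : FreeMonoid X) :
    ∀ w ∈ ((sm a : FreeAlg k X) * f).coeff.support, ∃ u ∈ f.coeff.support, w = a * u := by
  intro w hw
  have hw' : w ∈ ((sm a : FreeAlg k X) * f * sm 1).coeff.support := by rwa [sm_one, mul_one]
  rw [conj_support] at hw'
  obtain ⟨u, hu, huw⟩ := Finset.mem_image.1 hw'
  exact ⟨u, hu, by rw [← huw, mul_one]⟩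

theorem supp_smgsub (H : Hyp I O g) {t : FreeMonoid X} (ht : t ∈ O) :
    ∀ u ∈ ((sm t : FreeAlg k X) - g t).coeff.support, DegLexLT X u t := by
  intro u hu
  have hne : u ≠ t := by
    rintro rfl
    apply Finsupp.mem_support_iff.1 hu
    rw [MonoidAlgebra.coeff_sub, Finsupp.sub_apply, H.coeff _ ht,
      show (sm u : FreeAlg k X).coeff u = 1 from Finsupp.single_eq_same, sub_self]
  have h0 : (sm t : FreeAlg k X).coeff u = 0 := Finsupp.single_eq_of_ne' (Ne.symm hne)
  have : (g t : FreeAlg k X).coeff u ≠ 0 := by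
    intro hg
    apply Finsupp.mem_support_iff.1 hu
    rw [MonoidAlgebra.coeff_sub, Finsupp.sub_apply, h0, hg, sub_self]
  exact H.lt _ ht u (Finsupp.mem_support_iff.2 this) hne

theorem sumL_neg (g : FreeMonoid X → FreeAlg k X) (L) :
    sumL g (L.map (fun p => (-p.1, p.2))) = - sumL g L := by
  induction L with
  | nil => simp [sumL_nil]
  | cons q L ih =>
      rw [List.map_cons, sumL_cons, sumL_cons, ih, neg_add]
      congr 1
      show (-q.1) • ((sm q.2.2.1 : FreeAlg k X) * g q.2.1 * sm q.2.2.2) = -phi g q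
      rw [neg_smul]
      rfl

theorem sumL_smul (g : FreeMonoid X → FreeAlg k X) (c : k) (L) :
    sumL g (L.map (fun p => (c * p.1, p.2))) = c • sumL g L := by
  induction L with
  | nil => simp [sumL_nil]
  | cons q L ih =>
      rw [List.map_cons, sumL_cons, sumL_cons, ih, smul_add]
      congr 1
      show (c * q.1) • ((sm q.2.2.1 : FreeAlg k X) * g q.2.1 * sm q.2.2.2) = c • phi g q
      rw [mul_smul]
      rfl

theorem sumL_conj (g : FreeMonoid X → FreeAlg k X) (a b : FreeMonoid X) (L) :
    (sm a : FreeAlg k X) * sumL g L * sm b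
      = sumL g (L.map (fun q => (q.1, q.2.1, a * q.2.2.1, q.2.2.2 * b))) := by
  induction L with
  | nil => simp [sumL_nil]
  | cons q L ih =>
      rw [List.map_cons, sumL_cons, sumL_cons, ← ih, mul_add, add_mul]
      congr 1
      show (sm a : FreeAlg k X) * (q.1 • ((sm q.2.2.1 : FreeAlg k X) * g q.2.1 * sm q.2.2.2)) * sm b
        = q.1 • ((sm (a * q.2.2.1) : FreeAlg k X) * g q.2.1 * sm (q.2.2.2 * b))
      rw [mul_smul_comm, smul_mul_assoc, sm_mul, sm_mul]
      congr 1
      simp only [mul_assoc]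

theorem pair_step_aux (H : Hyp I O g) {o : FreeMonoid X}
    (hOmin : ∀ t, IsObstructionA k X I t → DegLexLT X t o → t ∈ O)
    (hObs : ∀ t ∈ O, IsObstructionA k X I t)
    (hlen : ∀ t₁ t₂ : FreeMonoid X, t₁ ∈ O → t₂ ∈ O → t₁.length + t₂.length ≤ o.length)
    {t₁ a₁ b₁ t₂ a₂ b₂ : FreeMonoid X} (ht₁ : t₁ ∈ O) (ht₂ : t₂ ∈ O)
    (hW : a₁ * t₁ * b₁ = a₂ * t₂ * b₂)
    (hne : ¬ (t₁ = t₂ ∧ a₁ = a₂ ∧ b₁ = b₂))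
    (hle : a₁.length ≤ a₂.length) :
    ∃ L, (∀ p ∈ L, p.2.1 ∈ O ∧ DegLexLT X (wrd p) (a₁ * t₁ * b₁)) ∧
      ((sm a₁ : FreeAlg k X) * g t₁ * sm b₁) - sm a₂ * g t₂ * sm b₂ = sumL g L := by
  have hel : a₁.toList ++ t₁.toList ++ b₁.toList = a₂.toList ++ t₂.toList ++ b₂.toList := by
    have h := congrArg FreeMonoid.toList hW
    simpa [FreeMonoid.toList_mul] using h
  rcases list_two_occ hel hle with ⟨C, hA, hB⟩ |
    ⟨x, y, z, hT1, hT2, hA, hB, hy, hz⟩ | ⟨e1, e2, e3⟩ | ⟨hlt, hinf⟩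
  · -- disjoint case
    set c : FreeMonoid X := FreeMonoid.ofList C with hc
    have hA' : a₂ = a₁ * t₁ * c := FreeMonoid.toList.injective (by
      simp only [FreeMonoid.toList_mul, hc, FreeMonoid.toList_ofList]; exact hA)
    have hB' : b₁ = c * t₂ * b₂ := FreeMonoid.toList.injective (by
      simp only [FreeMonoid.toList_mul, hc, FreeMonoid.toList_ofList]; exact hB)
    set D₂ : FreeAlg k X := (sm t₂ : FreeAlg k X) - g t₂ with hD₂
    set D₁ : FreeAlg k X := (sm t₁ : FreeAlg k X) - g t₁ with hD₁
    have hid : ((sm a₁ : FreeAlg k X) * g t₁ * sm b₁) - sm a₂ * g t₂ * sm b₂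
        = ((sm a₁ : FreeAlg k X) * g t₁ * sm c) * D₂ * sm b₂
          - (sm a₁ : FreeAlg k X) * D₁ * ((sm c : FreeAlg k X) * g t₂ * sm b₂) := by
      rw [hA', hB', sm_mul, sm_mul, sm_mul, sm_mul, hD₁, hD₂]
      simp only [mul_sub, sub_mul, mul_assoc]
      abel
    set L₁ := D₂.coeff.support.toList.map (fun u => ((D₂.coeff u : k), t₁, a₁, c * u * b₂)) with hL₁
    set L₂ := D₁.coeff.support.toList.map (fun u => (-(D₁.coeff u : k), t₂, a₁ * u * c, b₂)) with hL₂
    have hsum₁ : ((sm a₁ : FreeAlg k X) * g t₁ * sm c) * D₂ * sm b₂ = sumL g L₁ := by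
      rw [mul_expand]
      rw [hL₁, sumL, List.map_map]
      congr 1
      apply List.map_congr_left
      intro u hu
      show (D₂.coeff u : k) • ((sm a₁ : FreeAlg k X) * g t₁ * sm c * sm u * sm b₂)
        = (D₂.coeff u : k) • ((sm a₁ : FreeAlg k X) * g t₁ * sm (c * u * b₂))
      congr 1
      rw [sm_mul, sm_mul]
      simp only [mul_assoc]
    set L₂p := D₁.coeff.support.toList.map (fun u => ((D₁.coeff u : k), t₂, a₁ * u * c, b₂)) with hL₂p
    have hL₂e : L₂ = L₂p.map (fun p => (-p.1, p.2)) := by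
      rw [hL₂, hL₂p, List.map_map]
      rfl
    have hsum₂p : (sm a₁ : FreeAlg k X) * D₁ * ((sm c : FreeAlg k X) * g t₂ * sm b₂)
        = sumL g L₂p := by
      rw [mul_expand]
      rw [hL₂p, sumL, List.map_map]
      congr 1
      apply List.map_congr_left
      intro u hu
      show (D₁.coeff u : k) • ((sm a₁ : FreeAlg k X) * sm u * ((sm c : FreeAlg k X) * g t₂ * sm b₂))
        = (D₁.coeff u : k) • ((sm (a₁ * u * c) : FreeAlg k X) * g t₂ * sm b₂)
      congr 1
      rw [sm_mul, sm_mul]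
      simp only [mul_assoc]
    have hsum₂ : sumL g L₂ = -((sm a₁ : FreeAlg k X) * D₁ * ((sm c : FreeAlg k X) * g t₂ * sm b₂)) := by
      rw [hL₂e, sumL_neg, hsum₂p]
    refine ⟨L₁ ++ L₂, ?_, ?_⟩
    · intro p hp
      rcases List.mem_append.1 hp with hp | hp
      · rw [hL₁] at hp
        obtain ⟨u, hu, rfl⟩ := List.mem_map.1 hp
        have huD : DegLexLT X u t₂ := supp_smgsub H ht₂ u (by
          rw [← hD₂]; exact Finset.mem_toList.1 hu)
        refine ⟨ht₁, ?_⟩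
        show DegLexLT X (a₁ * t₁ * (c * u * b₂)) (a₁ * t₁ * b₁)
        rw [hB']
        exact dlt_mul_left (dlt_mul huD)
      · rw [hL₂] at hp
        obtain ⟨u, hu, rfl⟩ := List.mem_map.1 hp
        have huD : DegLexLT X u t₁ := supp_smgsub H ht₁ u (by
          rw [← hD₁]; exact Finset.mem_toList.1 hu)
        refine ⟨ht₂, ?_⟩
        show DegLexLT X ((a₁ * u * c) * t₂ * b₂) (a₁ * t₁ * b₁)
        rw [hW, hA']
        exact dlt_mul_right (dlt_mul_right (dlt_mul huD))
    · rw [hid, sumL_append, hsum₁, hsum₂]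
      abel
  · -- overlap case
    set x' : FreeMonoid X := FreeMonoid.ofList x with hx'
    set y' : FreeMonoid X := FreeMonoid.ofList y with hy'
    set z' : FreeMonoid X := FreeMonoid.ofList z with hz'
    have hT1' : t₁ = x' * y' := FreeMonoid.toList.injective (by
      simp only [FreeMonoid.toList_mul, hx', hy', FreeMonoid.toList_ofList]; exact hT1)
    have hT2' : t₂ = y' * z' := FreeMonoid.toList.injective (by
      simp only [FreeMonoid.toList_mul, hy', hz', FreeMonoid.toList_ofList]; exact hT2)
    have hA' : a₂ = a₁ * x' := FreeMonoid.toList.injective (by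
      simp only [FreeMonoid.toList_mul, hx', FreeMonoid.toList_ofList]; exact hA)
    have hB' : b₁ = z' * b₂ := FreeMonoid.toList.injective (by
      simp only [FreeMonoid.toList_mul, hz', FreeMonoid.toList_ofList]; exact hB)
    set v : FreeMonoid X := t₁ * z' with hv
    have hveq : v = x' * t₂ := by
      rw [hv, hT1', hT2', mul_assoc]
    set s : FreeAlg k X := g t₁ * sm z' - (sm x' : FreeAlg k X) * g t₂ with hs
    have hsI : s ∈ I :=
      I.sub_mem (I.mul_mem_right _ _ (H.mem _ ht₁)) (I.mul_mem_left _ _ (H.mem _ ht₂))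
    have hc1 : (g t₁ * sm z' : FreeAlg k X).coeff v = 1 := by
      rw [hv, mul_sm_coeff, H.coeff _ ht₁]
    have hc2 : ((sm x' : FreeAlg k X) * g t₂).coeff v = 1 := by
      rw [hveq, sm_mul_coeff, H.coeff _ ht₂]
    have hsv : (s : FreeAlg k X).coeff v = 0 := by
      rw [hs, MonoidAlgebra.coeff_sub, Finsupp.sub_apply, hc1, hc2, sub_self]
    have hsupp : ∀ w ∈ s.coeff.support, DegLexLT X w v := by
      intro w hw
      have hwne : w ≠ v := by
        rintro rfl
        exact Finsupp.mem_support_iff.1 hw hsv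
      rcases Finset.mem_union.1 (Finsupp.support_sub hw) with h | h
      · obtain ⟨u, hu, rfl⟩ := mul_sm_supp (g t₁) z' w h
        rcases eq_or_ne u t₁ with rfl | hune
        · exact absurd rfl hwne
        · rw [hv]
          exact dlt_mul_right (H.lt _ ht₁ u hu hune)
      · obtain ⟨u, hu, rfl⟩ := sm_mul_supp (g t₂) x' w h
        rcases eq_or_ne u t₂ with rfl | hune
        · exact absurd hveq.symm hwne
        · rw [hveq]
          exact dlt_mul_left (H.lt _ ht₂ u hu hune)
    have hvo : DegLexLT X v o := by
      apply dlt_of_length_lt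
      have l1 : v.length = t₁.length + z.length := by
        rw [hv, FreeMonoid.length_mul]
        rfl
      have l2 : t₂.length = y.length + z.length := by
        rw [hT2', FreeMonoid.length_mul]
        rfl
      have l3 : 0 < y.length := List.length_pos_iff.2 hy
      have l4 := hlen t₁ t₂ ht₁ ht₂
      omega
    obtain ⟨Lu, hLu, hsum⟩ := star H hOmin (dle_of_dlt hvo) hsI hsupp
    have hid : ((sm a₁ : FreeAlg k X) * g t₁ * sm b₁) - sm a₂ * g t₂ * sm b₂
        = (sm a₁ : FreeAlg k X) * s * sm b₂ := by
      rw [hA', hB', sm_mul, sm_mul, hs]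
      simp only [mul_sub, sub_mul, mul_assoc]
    refine ⟨Lu.map (fun q => (q.1, q.2.1, a₁ * q.2.2.1, q.2.2.2 * b₂)), ?_, ?_⟩
    · intro p hp
      obtain ⟨q, hq, rfl⟩ := List.mem_map.1 hp
      obtain ⟨hqO, hqlt⟩ := hLu q hq
      refine ⟨hqO, ?_⟩
      have h1 : DegLexLT X (a₁ * wrd q * b₂) (a₁ * v * b₂) := dlt_mul hqlt
      have e1 : wrd (q.1, q.2.1, a₁ * q.2.2.1, q.2.2.2 * b₂) = a₁ * wrd q * b₂ := by
        show (a₁ * q.2.2.1) * q.2.1 * (q.2.2.2 * b₂) = _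
        show _ = a₁ * (q.2.2.1 * q.2.1 * q.2.2.2) * b₂
        simp only [mul_assoc]
      have e2 : a₁ * v * b₂ = a₁ * t₁ * b₁ := by
        rw [hv, hB']
        simp only [mul_assoc]
      rw [e1, ← e2]
      exact h1
    · rw [hid, hsum, sumL_conj]
  · -- identical occurrences: contradiction
    exact absurd ⟨FreeMonoid.toList.injective e1, FreeMonoid.toList.injective e2,
      FreeMonoid.toList.injective e3⟩ hne
  · -- proper containment: contradiction with t₁ being an obstruction
    exfalso
    have hne' : (t₂ : FreeMonoid X) ≠ t₁ := by
      intro h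
      rw [h] at hlt
      exact lt_irrefl _ hlt
    exact (hObs t₁ ht₁).2 t₂ hinf hne' (hObs t₂ ht₂).1

theorem pair_step (H : Hyp I O g) {o : FreeMonoid X}
    (hOmin : ∀ t, IsObstructionA k X I t → DegLexLT X t o → t ∈ O)
    (hObs : ∀ t ∈ O, IsObstructionA k X I t)
    (hlen : ∀ t₁ t₂ : FreeMonoid X, t₁ ∈ O → t₂ ∈ O → t₁.length + t₂.length ≤ o.length)
    {t₁ a₁ b₁ t₂ a₂ b₂ : FreeMonoid X} (ht₁ : t₁ ∈ O) (ht₂ : t₂ ∈ O)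
    (hW : a₁ * t₁ * b₁ = a₂ * t₂ * b₂)
    (hne : ¬ (t₁ = t₂ ∧ a₁ = a₂ ∧ b₁ = b₂)) :
    ∃ L, (∀ p ∈ L, p.2.1 ∈ O ∧ DegLexLT X (wrd p) (a₁ * t₁ * b₁)) ∧
      ((sm a₁ : FreeAlg k X) * g t₁ * sm b₁) - sm a₂ * g t₂ * sm b₂ = sumL g L := by
  by_cases hle : a₁.length ≤ a₂.length
  · exact pair_step_aux H hOmin hObs hlen ht₁ ht₂ hW hne hle
  · push_neg at hle
    obtain ⟨L, hL, hsum⟩ := pair_step_aux H hOmin hObs hlen ht₂ ht₁ hW.symm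
      (fun ⟨h1, h2, h3⟩ => hne ⟨h1.symm, h2.symm, h3.symm⟩) hle.le
    refine ⟨L.map (fun p => (-p.1, p.2)), ?_, ?_⟩
    · intro p hp
      obtain ⟨q, hq, rfl⟩ := List.mem_map.1 hp
      obtain ⟨hqO, hqlt⟩ := hL q hq
      refine ⟨hqO, ?_⟩
      show DegLexLT X (wrd q) _
      rw [hW]
      exact hqlt
    · rw [sumL_neg, ← hsum]
      abel
end Part3d
section Part4a
set_option linter.unusedSectionVars false
set_option maxHeartbeats 1000000
attribute [local instance] Classical.propDecidable
open FreeMonoid MonoidAlgebra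

variable {k : Type} [Field k] {X : Type} [Fintype X] [LinearOrder X]
variable {I : TwoSidedIdeal (FreeAlg k X)} {O : Set (FreeMonoid X)}
  {g : FreeMonoid X → FreeAlg k X}

/-- The set of elements representable as combinations of the reducers. -/
def RepSet (g : FreeMonoid X → FreeAlg k X) (O : Set (FreeMonoid X)) : Set (FreeAlg k X) :=
  {x | ∃ L, (∀ p ∈ L, p.2.1 ∈ O) ∧ x = sumL g L}

theorem repset_zero : (0 : FreeAlg k X) ∈ RepSet g O := ⟨[], by simp, (sumL_nil g).symm⟩

theorem repset_add {x y : FreeAlg k X} (hx : x ∈ RepSet g O) (hy : y ∈ RepSet g O) :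
    x + y ∈ RepSet g O := by
  obtain ⟨L₁, hL₁, rfl⟩ := hx
  obtain ⟨L₂, hL₂, rfl⟩ := hy
  refine ⟨L₁ ++ L₂, ?_, (sumL_append g L₁ L₂).symm⟩
  intro p hp
  rcases List.mem_append.1 hp with h | h
  · exact hL₁ p h
  · exact hL₂ p h

theorem repset_neg {x : FreeAlg k X} (hx : x ∈ RepSet g O) : -x ∈ RepSet g O := by
  obtain ⟨L, hL, rfl⟩ := hx
  refine ⟨L.map (fun p => (-p.1, p.2)), ?_, (sumL_neg g L).symm⟩
  intro p hp
  obtain ⟨q, hq, rfl⟩ := List.mem_map.1 hp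
  exact hL q hq

theorem mul_phi_rep (x : FreeAlg k X) (q : k × FreeMonoid X × FreeMonoid X × FreeMonoid X) :
    x * phi g q = sumL g (x.coeff.support.toList.map
      (fun u => (q.1 * (x.coeff u : k), q.2.1, u * q.2.2.1, q.2.2.2))) := by
  have h1 : x * phi g q = q.1 • (x * ((sm q.2.2.1 : FreeAlg k X) * g q.2.1 * sm q.2.2.2)) := by
    show x * (q.1 • ((sm q.2.2.1 : FreeAlg k X) * g q.2.1 * sm q.2.2.2)) = _
    rw [mul_smul_comm]
  rw [h1, expand_left x ((sm q.2.2.1 : FreeAlg k X) * g q.2.1 * sm q.2.2.2), List.smul_sum,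
    sumL, List.map_map, List.map_map]
  congr 1
  apply List.map_congr_left
  intro u hu
  show q.1 • ((x.coeff u : k) • ((sm u : FreeAlg k X) * ((sm q.2.2.1 : FreeAlg k X) * g q.2.1 * sm q.2.2.2)))
    = (q.1 * (x.coeff u : k)) • ((sm (u * q.2.2.1) : FreeAlg k X) * g q.2.1 * sm q.2.2.2)
  rw [smul_smul, sm_mul]
  congr 1
  simp only [mul_assoc]

theorem phi_mul_rep (x : FreeAlg k X) (q : k × FreeMonoid X × FreeMonoid X × FreeMonoid X) :
    phi g q * x = sumL g (x.coeff.support.toList.map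
      (fun u => (q.1 * (x.coeff u : k), q.2.1, q.2.2.1, q.2.2.2 * u))) := by
  have h1 : phi g q * x = q.1 • (((sm q.2.2.1 : FreeAlg k X) * g q.2.1 * sm q.2.2.2) * x) := by
    show (q.1 • ((sm q.2.2.1 : FreeAlg k X) * g q.2.1 * sm q.2.2.2)) * x = _
    rw [smul_mul_assoc]
  rw [h1, expand_right x ((sm q.2.2.1 : FreeAlg k X) * g q.2.1 * sm q.2.2.2), List.smul_sum,
    sumL, List.map_map, List.map_map]
  congr 1
  apply List.map_congr_left
  intro u hu
  show q.1 • ((x.coeff u : k) • (((sm q.2.2.1 : FreeAlg k X) * g q.2.1 * sm q.2.2.2) * (sm u : FreeAlg k X)))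
    = (q.1 * (x.coeff u : k)) • ((sm q.2.2.1 : FreeAlg k X) * g q.2.1 * sm (q.2.2.2 * u))
  rw [smul_smul, sm_mul]
  congr 1
  simp only [mul_assoc]

theorem repset_mul_left (x : FreeAlg k X) {y : FreeAlg k X} (hy : y ∈ RepSet g O) :
    x * y ∈ RepSet g O := by
  obtain ⟨L, hL, rfl⟩ := hy
  induction L with
  | nil =>
      rw [sumL_nil, mul_zero]
      exact repset_zero
  | cons q L ih =>
      rw [sumL_cons, mul_add]
      apply repset_add
      · rw [mul_phi_rep]
        refine ⟨_, ?_, rfl⟩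
        intro p hp
        obtain ⟨u, hu, rfl⟩ := List.mem_map.1 hp
        exact hL q (by simp)
      · exact ih (fun p hp => hL p (by simp [hp]))

theorem repset_mul_right (y : FreeAlg k X) {x : FreeAlg k X} (hx : x ∈ RepSet g O) :
    x * y ∈ RepSet g O := by
  obtain ⟨L, hL, rfl⟩ := hx
  induction L with
  | nil =>
      rw [sumL_nil, zero_mul]
      exact repset_zero
  | cons q L ih =>
      rw [sumL_cons, add_mul]
      apply repset_add
      · rw [phi_mul_rep]
        refine ⟨_, ?_, rfl⟩
        intro p hp
        obtain ⟨u, hu, rfl⟩ := List.mem_map.1 hp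
        exact hL q (by simp)
      · exact ih (fun p hp => hL p (by simp [hp]))

/-- The two-sided ideal of representable elements. -/
noncomputable def CIdeal (g : FreeMonoid X → FreeAlg k X) (O : Set (FreeMonoid X)) :
    TwoSidedIdeal (FreeAlg k X) :=
  TwoSidedIdeal.mk' (RepSet g O) repset_zero repset_add repset_neg
    (fun {x y} hy => repset_mul_left x hy) (fun {x y} hx => repset_mul_right y hx)

theorem mem_CIdeal {x : FreeAlg k X} : x ∈ CIdeal g O ↔ x ∈ RepSet g O := by
  rw [CIdeal, TwoSidedIdeal.mem_mk']

theorem dle_antisymm {u v : FreeMonoid X} (h1 : dle X u v) (h2 : dle X v u) : u = v := by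
  rcases h1 with h1 | rfl
  · rcases h2 with h2 | rfl
    · exact absurd (dlt_trans h1 h2) (dlt_irrefl u)
    · rfl
  · rfl

end Part4a
section Part4b
set_option linter.unusedSectionVars false
set_option maxHeartbeats 1600000
attribute [local instance] Classical.propDecidable
open FreeMonoid MonoidAlgebra

variable {k : Type} [Field k] {X : Type} [Fintype X] [LinearOrder X]

theorem obstruction_length_lt
    (I : TwoSidedIdeal (FreeAlg k X)) (S : Finset (FreeAlg k X)) (m N : ℕ)
    (hspan : I = TwoSidedIdeal.span (S : Set (FreeAlg k X)))
    (hdeg : ∀ f ∈ S, ∀ w ∈ f.coeff.support, FreeMonoid.length w ≤ m)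
    (hmN : m ≤ N)
    (hgap : ∀ w : FreeMonoid X, IsObstructionA k X I w →
      ¬ (N ≤ w.length ∧ w.length ≤ 2 * N)) :
    ∀ w : FreeMonoid X, IsObstructionA k X I w → w.length < N := by
  have main : ∀ w : FreeMonoid X, IsObstructionA k X I w → ¬ (2 * N < w.length) := by
    by_contra hcon
    push_neg at hcon
    obtain ⟨w0, hw0obs, hw0len⟩ := hcon
    have hbigne : {w : FreeMonoid X | IsObstructionA k X I w ∧ 2 * N < w.length}.Nonempty :=
      ⟨w0, hw0obs, hw0len⟩
    obtain ⟨o, hoBad, homin⟩ := dlt_wf.has_min _ hbigne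
    obtain ⟨hoobs, holen⟩ := hoBad
    set O := {t : FreeMonoid X | IsObstructionA k X I t ∧ t.length < N} with hOdef
    have hObs : ∀ t ∈ O, IsObstructionA k X I t := fun t ht => ht.1
    have hOmin : ∀ t, IsObstructionA k X I t → DegLexLT X t o → t ∈ O := by
      intro t htobs htlt
      by_contra htO
      have hlen' : ¬ t.length < N := fun hh => htO ⟨htobs, hh⟩
      push_neg at hlen'
      rcases lt_or_ge (2 * N) t.length with h2 | h2
      · exact homin t ⟨htobs, h2⟩ htlt
      · exact hgap t htobs ⟨hlen', h2⟩
    have hlenO : ∀ t₁ t₂ : FreeMonoid X, t₁ ∈ O → t₂ ∈ O →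
        t₁.length + t₂.length ≤ o.length := by
      intro t₁ t₂ h1 h2
      have e1 := h1.2
      have e2 := h2.2
      omega
    -- choose monic reducers
    have hex : ∀ t : FreeMonoid X, t ∈ O → ∃ f : FreeAlg k X,
        f ∈ I ∧ (f : FreeAlg k X).coeff t = 1 ∧ ∀ u ∈ f.coeff.support, u ≠ t → DegLexLT X u t := by
      intro t ht
      obtain ⟨f, hfI, hflm⟩ := ht.1.1
      have hc : (f : FreeAlg k X).coeff t ≠ 0 := Finsupp.mem_support_iff.1 hflm.1
      refine ⟨((f.coeff t : k)⁻¹) • f, smul_mem_I hfI, ?_, ?_⟩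
      · show ((f.coeff t : k)⁻¹) • f.coeff t = 1
        rw [smul_eq_mul, inv_mul_cancel₀ hc]
      · intro u hu hune
        exact hflm.2 u (Finsupp.support_smul hu) hune
    choose gg hg1 hg2 hg3 using hex
    set g : FreeMonoid X → FreeAlg k X :=
      fun t => if ht : t ∈ O then gg t ht else 0 with hgdef
    have H : Hyp I O g := by
      refine ⟨?_, ?_, ?_⟩
      · intro t ht
        rw [hgdef]
        simp only [dif_pos ht]
        exact hg1 t ht
      · intro t ht
        rw [hgdef]
        simp only [dif_pos ht]
        exact hg2 t ht
      · intro t ht u hu hune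
        rw [hgdef] at hu
        simp only [dif_pos ht] at hu
        exact hg3 t ht u hu hune
    obtain ⟨h, hhI, hlm⟩ := hoobs.1
    have hosupp : o ∈ h.coeff.support := hlm.1
    -- S is contained in the ideal of representable elements
    have hSC : (S : Set (FreeAlg k X)) ⊆ ((CIdeal g O : TwoSidedIdeal (FreeAlg k X)) :
        Set (FreeAlg k X)) := by
      intro f hfS
      rw [SetLike.mem_coe, mem_CIdeal]
      rcases eq_or_ne f 0 with rfl | hf0
      · exact repset_zero
      · have hfI : f ∈ I := by rw [hspan]; exact TwoSidedIdeal.subset_span hfS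
        have hsupp : ∀ w ∈ f.coeff.support, DegLexLT X w o := by
          intro w hw
          apply dlt_of_length_lt
          have := hdeg f hfS w hw
          omega
        obtain ⟨L, hL, hsum⟩ := star H hOmin (dle_refl o) hfI hsupp
        exact ⟨L, fun p hp => (hL p hp).1, hsum⟩
    have hhC : h ∈ CIdeal g O := by
      have hh' : h ∈ TwoSidedIdeal.span (S : Set (FreeAlg k X)) := by rw [← hspan]; exact hhI
      exact TwoSidedIdeal.mem_span_iff.1 hh' _ hSC
    obtain ⟨L₀, hL₀O, hL₀⟩ := mem_CIdeal.1 hhC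
    -- the set of deglex bounds of representations of h
    set WSet := {W : FreeMonoid X |
      ∃ L, (∀ p ∈ L, p.2.1 ∈ O ∧ dle X (wrd p) W) ∧ h = sumL g L} with hWSet
    have hL₀ne : L₀ ≠ [] := by
      rintro rfl
      rw [sumL_nil] at hL₀
      rw [hL₀] at hosupp
      simp at hosupp
    have hWne : WSet.Nonempty := by
      have hne : ((L₀.map wrd).toFinset : Finset (FreeMonoid X)).Nonempty := by
        rcases L₀ with _ | ⟨p, L⟩
        · exact absurd rfl hL₀ne
        · exact ⟨wrd p, by simp⟩
      obtain ⟨W, hWmem, hWmax⟩ := finset_exists_max _ hne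
      refine ⟨W, L₀, ?_, hL₀⟩
      intro p hp
      refine ⟨hL₀O p hp, ?_⟩
      have hmem : wrd p ∈ (L₀.map wrd).toFinset := by
        rw [List.mem_toFinset]
        exact List.mem_map.2 ⟨p, hp, rfl⟩
      rcases eq_or_ne (wrd p) W with he | hne'
      · exact Or.inr he
      · exact Or.inl (hWmax _ hmem hne')
    obtain ⟨W₀, hW₀mem, hW₀min⟩ := dlt_wf.has_min WSet hWne
    obtain ⟨Lw, hLw, hLwsum⟩ := hW₀mem
    -- no representation word equals o
    have hnwrd : ∀ p : k × FreeMonoid X × FreeMonoid X × FreeMonoid X,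
        p.2.1 ∈ O → wrd p ≠ o := by
      intro p hp heq
      have hinf : p.2.1.toList <:+: FreeMonoid.toList o := by
        refine ⟨p.2.2.1.toList, p.2.2.2.toList, ?_⟩
        rw [← heq]
        rfl
      have hne' : p.2.1 ≠ o := by
        have h1 := hp.2
        intro he
        rw [he] at h1
        omega
      exact hoobs.2 p.2.1 hinf hne' hp.1.1
    have hoW : DegLexLT X o W₀ := by
      obtain ⟨p, hpL, hpo⟩ := sumL_supp H (fun p hp => (hLw p hp).1) o
        (by rw [← hLwsum]; exact hosupp)
      have h1 : dle X o W₀ := dle_trans hpo (hLw p hpL).2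
      rcases h1 with h1 | h1
      · exact h1
      · exfalso
        have h2 : dle X (wrd p) o := by rw [h1]; exact (hLw p hpL).2
        exact hnwrd p (hLw p hpL).1 (dle_antisymm h2 hpo)
    have hcW : (h : FreeAlg k X).coeff W₀ = 0 := by
      by_contra h0
      have hmem : W₀ ∈ h.coeff.support := Finsupp.mem_support_iff.2 h0
      have h2 : dle X W₀ o := by
        rcases eq_or_ne W₀ o with he | hne'
        · exact Or.inr he
        · exact Or.inl (hlm.2 _ hmem hne')
      exact dlt_irrefl W₀ (dle_trans_dlt h2 hoW)
    -- main descent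
    have descent : ∀ n L, (∀ p ∈ L, p.2.1 ∈ O ∧ dle X (wrd p) W₀) → h = sumL g L →
        (L.filter (fun p => wrd p = W₀)).length = n → False := by
      intro n
      induction n using Nat.strong_induction_on with
      | _ n ih =>
        intro L hL hsum hcount
        rcases Nat.eq_zero_or_pos n with rfl | hpos
        · -- no top term: contradicts minimality of W₀
          have hLne : L ≠ [] := by
            rintro rfl
            rw [sumL_nil] at hsum
            rw [hsum] at hosupp
            simp at hosupp
          have hne : ((L.map wrd).toFinset : Finset (FreeMonoid X)).Nonempty := by
            rcases L with _ | ⟨p, L'⟩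
            · exact absurd rfl hLne
            · exact ⟨wrd p, by simp⟩
          obtain ⟨W, hWmem, hWmax⟩ := finset_exists_max _ hne
          obtain ⟨p', hp'L, hp'W⟩ := List.mem_map.1 (List.mem_toFinset.1 hWmem)
          have hfilnil : L.filter (fun p => wrd p = W₀) = [] :=
            List.length_eq_zero_iff.1 hcount
          have hWlt : DegLexLT X W W₀ := by
            apply dlt_of_dle_of_ne
            · rw [← hp'W]
              exact (hL p' hp'L).2
            · intro he
              have hmem2 : p' ∈ L.filter (fun p => wrd p = W₀) :=
                List.mem_filter.2 ⟨hp'L, by simp [hp'W, he]⟩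
              rw [hfilnil] at hmem2
              simp at hmem2
          apply hW₀min W _ hWlt
          refine ⟨L, ?_, hsum⟩
          intro p hp
          refine ⟨(hL p hp).1, ?_⟩
          rcases eq_or_ne (wrd p) W with he | hne'
          · exact Or.inr he
          · refine Or.inl (hWmax _ ?_ hne')
            rw [List.mem_toFinset]
            exact List.mem_map.2 ⟨p, hp, rfl⟩
        · -- n ≥ 1
          have hF : (L.filter (fun p => wrd p = W₀)) ≠ [] := by
            intro he
            rw [he] at hcount
            simp at hcount
            omega
          obtain ⟨p₁, hp₁F⟩ := List.exists_mem_of_ne_nil _ hF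
          obtain ⟨hp₁L, hp₁W'⟩ := List.mem_filter.1 hp₁F
          have hp₁W : wrd p₁ = W₀ := of_decide_eq_true hp₁W'
          obtain ⟨L1, hperm1⟩ : ∃ L1, L.Perm (p₁ :: L1) := ⟨_, List.perm_cons_erase hp₁L⟩
          have hL1 : ∀ p ∈ L1, p.2.1 ∈ O ∧ dle X (wrd p) W₀ :=
            fun p hp => hL p (hperm1.mem_iff.2 (List.mem_cons_of_mem _ hp))
          have hcount1 : (L1.filter (fun p => wrd p = W₀)).length = n - 1 := by
            have hpf := (hperm1.filter (fun p => wrd p = W₀)).length_eq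
            rw [hcount, List.filter_cons_of_pos (by simp [hp₁W])] at hpf
            simp at hpf
            omega
          have hsum1 : h = phi g p₁ + sumL g L1 := by
            rw [hsum, sumL_perm g hperm1, sumL_cons]
          have hcoeff : ((L.filter (fun p => wrd p = W₀)).map (fun p => p.1)).sum = 0 := by
            rw [← sumL_coeff H hL, ← hsum, hcW]
          rcases Nat.lt_or_ge n 2 with hn2 | hn2
          · -- n = 1 : the unique coefficient is zero
            have hn1 : n = 1 := by omega
            have hF1 : L1.filter (fun p => wrd p = W₀) = [] := by
              apply List.length_eq_zero_iff.1
              rw [hcount1, hn1]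
            have hclist : (L.filter (fun p => wrd p = W₀)).Perm [p₁] := by
              have hpf := hperm1.filter (fun p => wrd p = W₀)
              rw [List.filter_cons_of_pos (by simp [hp₁W]), hF1] at hpf
              exact hpf
            have hp₁0 : p₁.1 = 0 := by
              have hs := (hclist.map (fun p => p.1)).sum_eq
              rw [hcoeff] at hs
              simpa using hs.symm
            have hphi0 : phi g p₁ = 0 := by
              show p₁.1 • ((sm p₁.2.2.1 : FreeAlg k X) * g p₁.2.1 * sm p₁.2.2.2) = 0
              rw [hp₁0, zero_smul]
            exact ih (n - 1) (by omega) L1 hL1 (by rw [hsum1, hphi0, zero_add]) hcount1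
          · -- n ≥ 2 : two top terms
            have hF1ne : L1.filter (fun p => wrd p = W₀) ≠ [] := by
              intro he
              rw [he] at hcount1
              simp at hcount1
              omega
            obtain ⟨p₂, hp₂F⟩ := List.exists_mem_of_ne_nil _ hF1ne
            obtain ⟨hp₂L1, hp₂W'⟩ := List.mem_filter.1 hp₂F
            have hp₂W : wrd p₂ = W₀ := of_decide_eq_true hp₂W'
            obtain ⟨L2, hperm2⟩ : ∃ L2, L1.Perm (p₂ :: L2) := ⟨_, List.perm_cons_erase hp₂L1⟩
            have hL2 : ∀ p ∈ L2, p.2.1 ∈ O ∧ dle X (wrd p) W₀ :=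
              fun p hp => hL1 p (hperm2.mem_iff.2 (List.mem_cons_of_mem _ hp))
            have hcount2 : (L2.filter (fun p => wrd p = W₀)).length = n - 2 := by
              have hpf := (hperm2.filter (fun p => wrd p = W₀)).length_eq
              rw [hcount1, List.filter_cons_of_pos (by simp [hp₂W])] at hpf
              simp at hpf
              omega
            have hsum2 : h = phi g p₁ + (phi g p₂ + sumL g L2) := by
              rw [hsum1, sumL_perm g hperm2, sumL_cons]
            rcases eq_or_ne p₁.2 p₂.2 with hdata | hdata
            · -- identical data: merge the two terms
              have hmerge : phi g p₁ + phi g p₂ = phi g (p₁.1 + p₂.1, p₂.2) := by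
                show p₁.1 • ((sm p₁.2.2.1 : FreeAlg k X) * g p₁.2.1 * sm p₁.2.2.2)
                    + p₂.1 • ((sm p₂.2.2.1 : FreeAlg k X) * g p₂.2.1 * sm p₂.2.2.2)
                  = (p₁.1 + p₂.1) • ((sm p₂.2.2.1 : FreeAlg k X) * g p₂.2.1 * sm p₂.2.2.2)
                rw [hdata, add_smul]
              have hnewsum : h = sumL g ((p₁.1 + p₂.1, p₂.2) :: L2) := by
                rw [sumL_cons, ← hmerge, hsum2]
                abel
              have hnewL : ∀ p ∈ (p₁.1 + p₂.1, p₂.2) :: L2,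
                  p.2.1 ∈ O ∧ dle X (wrd p) W₀ := by
                intro p hp
                rcases List.mem_cons.1 hp with rfl | hp'
                · refine ⟨(hL1 p₂ hp₂L1).1, ?_⟩
                  show dle X (wrd (p₁.1 + p₂.1, p₂.2)) W₀
                  have : wrd (p₁.1 + p₂.1, p₂.2) = wrd p₂ := rfl
                  rw [this, hp₂W]
                  exact dle_refl _
                · exact hL2 p hp'
              have hnewcount : (((p₁.1 + p₂.1, p₂.2) :: L2).filter
                  (fun p => wrd p = W₀)).length = n - 1 := by
                rw [List.filter_cons_of_pos (by
                  have : wrd ((p₁.1 + p₂.1, p₂.2) :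
                    k × FreeMonoid X × FreeMonoid X × FreeMonoid X) = wrd p₂ := rfl
                  simp [this, hp₂W])]
                simp [hcount2]
                omega
              exact ih (n - 1) (by omega) _ hnewL hnewsum hnewcount
            · -- distinct occurrences: resolve the pair
              have hWeq : p₁.2.2.1 * p₁.2.1 * p₁.2.2.2 = p₂.2.2.1 * p₂.2.1 * p₂.2.2.2 := by
                show wrd p₁ = wrd p₂
                rw [hp₁W, hp₂W]
              have hne' : ¬ (p₁.2.1 = p₂.2.1 ∧ p₁.2.2.1 = p₂.2.2.1 ∧ p₁.2.2.2 = p₂.2.2.2) := by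
                rintro ⟨e1, e2, e3⟩
                apply hdata
                exact Prod.ext e1 (Prod.ext e2 e3)
              obtain ⟨Lp, hLp, hdiff⟩ := pair_step H hOmin hObs hlenO
                (hL p₁ hp₁L).1 (hL1 p₂ hp₂L1).1 hWeq hne'
              set Lnew := (Lp.map (fun p => (p₁.1 * p.1, p.2)))
                ++ ((p₁.1 + p₂.1, p₂.2) :: L2) with hLnewdef
              have hsumnew : h = sumL g Lnew := by
                rw [hLnewdef, sumL_append, sumL_smul, ← hdiff, sumL_cons]
                rw [hsum2]
                show phi g p₁ + (phi g p₂ + sumL g L2) = _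
                have e1 : phi g p₁ = p₁.1 • ((sm p₁.2.2.1 : FreeAlg k X) * g p₁.2.1 * sm p₁.2.2.2) := rfl
                have e2 : phi g p₂ = p₂.1 • ((sm p₂.2.2.1 : FreeAlg k X) * g p₂.2.1 * sm p₂.2.2.2) := rfl
                have e3 : phi g (p₁.1 + p₂.1, p₂.2)
                    = (p₁.1 + p₂.1) • ((sm p₂.2.2.1 : FreeAlg k X) * g p₂.2.1 * sm p₂.2.2.2) := rfl
                rw [e1, e2, e3, smul_sub, add_smul]
                abel
              have hnewL : ∀ p ∈ Lnew, p.2.1 ∈ O ∧ dle X (wrd p) W₀ := by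
                intro p hp
                rw [hLnewdef] at hp
                rcases List.mem_append.1 hp with hp' | hp'
                · obtain ⟨q, hq, rfl⟩ := List.mem_map.1 hp'
                  obtain ⟨hqO, hqlt⟩ := hLp q hq
                  refine ⟨hqO, ?_⟩
                  have hw : wrd ((p₁.1 * q.1, q.2) :
                      k × FreeMonoid X × FreeMonoid X × FreeMonoid X) = wrd q := rfl
                  rw [hw]
                  left
                  have : (p₁.2.2.1 * p₁.2.1 * p₁.2.2.2 : FreeMonoid X) = W₀ := hp₁W
                  rw [← this]
                  exact hqlt
                · rcases List.mem_cons.1 hp' with rfl | hp''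
                  · refine ⟨(hL1 p₂ hp₂L1).1, ?_⟩
                    have hw : wrd ((p₁.1 + p₂.1, p₂.2) :
                        k × FreeMonoid X × FreeMonoid X × FreeMonoid X) = wrd p₂ := rfl
                    rw [hw, hp₂W]
                    exact dle_refl _
                  · exact hL2 p hp''
              have hnewcount : (Lnew.filter (fun p => wrd p = W₀)).length = n - 1 := by
                rw [hLnewdef, List.filter_append]
                have hmap0 : ((Lp.map (fun p => (p₁.1 * p.1, p.2))).filter
                    (fun p => wrd p = W₀)) = [] := by
                  rw [List.filter_eq_nil_iff]
                  intro q hq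
                  obtain ⟨q', hq', rfl⟩ := List.mem_map.1 hq
                  obtain ⟨-, hqlt⟩ := hLp q' hq'
                  have hw : wrd ((p₁.1 * q'.1, q'.2) :
                      k × FreeMonoid X × FreeMonoid X × FreeMonoid X) = wrd q' := rfl
                  simp only [hw]
                  have hWp : (p₁.2.2.1 * p₁.2.1 * p₁.2.2.2 : FreeMonoid X) = W₀ := hp₁W
                  rw [hWp] at hqlt
                  simpa using dlt_ne hqlt
                rw [hmap0, List.nil_append,
                  List.filter_cons_of_pos (by
                    have hw : wrd ((p₁.1 + p₂.1, p₂.2) :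
                        k × FreeMonoid X × FreeMonoid X × FreeMonoid X) = wrd p₂ := rfl
                    simp [hw, hp₂W])]
                simp [hcount2]
                omega
              exact ih (n - 1) (by omega) _ hnewL hsumnew hnewcount
    exact descent _ Lw hLw hLwsum rfl
  intro w hw
  have h1 := main w hw
  have h2 := hgap w hw
  omega

end Part4b
set_option linter.unusedSectionVars false
set_option maxHeartbeats 1000000

theorem finite_groebner_of_obstruction_gap (k : Type) [Field k]
    (X : Type) [Fintype X] [LinearOrder X]
    (I : TwoSidedIdeal (FreeAlg k X)) (S : Finset (FreeAlg k X)) (m N : ℕ)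
    (hspan : I = TwoSidedIdeal.span (S : Set (FreeAlg k X)))
    (hdeg : ∀ f ∈ S, ∀ w ∈ f.coeff.support, FreeMonoid.length w ≤ m)
    (hmN : m ≤ N)
    (hgap : ∀ w : FreeMonoid X, IsObstructionA k X I w →
      ¬ (N ≤ w.length ∧ w.length ≤ 2 * N)) :
    (∃ G : Finset (FreeAlg k X), IsGroebnerBasis k X I (G : Set (FreeAlg k X))) ∧
      {w : FreeMonoid X | IsObstructionA k X I w}.Finite := by
  classical
  have hlen := obstruction_length_lt I S m N hspan hdeg hmN hgap
  have hfin : {w : FreeMonoid X | IsObstructionA k X I w}.Finite := by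
    apply Set.Finite.subset (Set.Finite.image (fun l : List X => FreeMonoid.ofList l)
      (List.finite_length_le X N))
    intro w hw
    exact ⟨w.toList, le_of_lt (hlen w hw), FreeMonoid.ofList_toList w⟩
  have hchoice : ∀ w : FreeMonoid X, IsObstructionA k X I w →
      ∃ f : FreeAlg k X, f ∈ I ∧ IsLeadingMonomial k X f w := fun w hw => hw.1
  choose! gg hgg1 hgg2 using hchoice
  refine ⟨⟨hfin.toFinset.image gg, ?_, ?_⟩, hfin⟩
  · intro x hx
    rw [Finset.coe_image] at hx
    obtain ⟨w, hw, rfl⟩ := hx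
    rw [Finset.mem_coe, Set.Finite.mem_toFinset] at hw
    rw [SetLike.mem_coe]
    exact hgg1 w hw
  · intro f hfI hf0
    obtain ⟨wf, hwf⟩ := exists_lm hf0
    have hred : IsReducible k X I wf := ⟨f, hfI, hwf⟩
    obtain ⟨t, htobs, htinf⟩ := reducible_contains_obstruction wf.length wf le_rfl hred
    refine ⟨gg t, ?_, wf, t, hwf, hgg2 t htobs, htinf⟩
    rw [Finset.coe_image]
    exact ⟨t, by rw [Finset.mem_coe, Set.Finite.mem_toFinset]; exact htobs, rfl⟩
end
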